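/- arXiv:2508.12816 — 12 statements merged into one kernel-verified Lean document; each statement's English description precedes it below -/
import Mathlib

section
/- Let λ ∈ ℝ with 0 < λ, and let h, k, u be positive real numbers with h²·k·u·λ < 4. Then the real 2×2 matrix M = [[1 − h²kuλ, hk], [−huλ, 1]] has determinant 1 and trace 2 − h²kuλ of absolute value strictly less than 2; consequently, its characteristic polynomial has two distinct non-real complex roots, and every complex eigenvalue of M has modulus exactly 1. -/
open Polynomial Matrix

lemma charpoly_fin_two' (A : Matrix (Fin 2) (Fin 2) ℂ) :
    A.charpoly = X ^ 2 - C A.trace * X + C A.det := by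
  rw [Matrix.charpoly, Matrix.det_fin_two A, Matrix.trace_fin_two A,
    Matrix.det_fin_two (charmatrix A)]
  simp only [charmatrix_apply_eq, charmatrix_apply_ne _ _ _ (by decide : (0 : Fin 2) ≠ 1),
    charmatrix_apply_ne _ _ _ (by decide : (1 : Fin 2) ≠ 0), map_add, _root_.map_mul, map_sub]
  ring

/-- the per-eigenvalue stability matrix of the symplectic Euler scheme
has determinant 1, trace `2 - h²kuλ` of absolute value `< 2`, its characteristic
polynomial has two distinct non-real complex roots, and every complex eigenvalue
has modulus exactly 1. -/
theorem stmt0 (lam h k u : ℝ) (hlam : 0 < lam) (hh : 0 < h) (hk : 0 < k) (hu : 0 < u)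
    (hstab : h ^ 2 * k * u * lam < 4) :
    let M : Matrix (Fin 2) (Fin 2) ℝ :=
      !![1 - h ^ 2 * k * u * lam, h * k; -(h * u * lam), 1]
    M.det = 1 ∧ M.trace = 2 - h ^ 2 * k * u * lam ∧ |M.trace| < 2 ∧
      (∃ z₁ z₂ : ℂ, z₁ ≠ z₂ ∧ z₁.im ≠ 0 ∧ z₂.im ≠ 0 ∧
        (M.map (algebraMap ℝ ℂ)).charpoly = (X - Polynomial.C z₁) * (X - Polynomial.C z₂)) ∧
      (∀ z : ℂ, (M.map (algebraMap ℝ ℂ)).charpoly.IsRoot z → ‖z‖ = 1) := by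
  intro M
  have ht0 : 0 < h ^ 2 * k * u * lam := by positivity
  set t := h ^ 2 * k * u * lam with htdef
  have hdet : M.det = 1 := by
    show Matrix.det !![1 - t, h * k; -(h * u * lam), 1] = 1
    rw [Matrix.det_fin_two_of, htdef]; ring
  have htr : M.trace = 2 - t := by
    show Matrix.trace !![1 - t, h * k; -(h * u * lam), 1] = 2 - t
    rw [Matrix.trace_fin_two_of]; ring
  -- the mapped matrix
  have hMC : M.map (algebraMap ℝ ℂ) =
      !![((1 - t : ℝ) : ℂ), ((h * k : ℝ) : ℂ); ((-(h * u * lam) : ℝ) : ℂ), ((1 : ℝ) : ℂ)] := by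
    show (!![1 - t, h * k; -(h * u * lam), 1] : Matrix (Fin 2) (Fin 2) ℝ).map (algebraMap ℝ ℂ) = _
    ext i j
    fin_cases i <;> fin_cases j <;> simp [Matrix.map_apply]
  have hdetC : (M.map (algebraMap ℝ ℂ)).det = 1 := by
    rw [hMC, Matrix.det_fin_two_of, htdef]
    push_cast; ring
  have htrC : (M.map (algebraMap ℝ ℂ)).trace = ((2 - t : ℝ) : ℂ) := by
    rw [hMC, Matrix.trace_fin_two_of]
    push_cast; ring
  -- the roots
  set a : ℝ := (2 - t) / 2 with hadef
  have ha1 : a ^ 2 < 1 := by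
    rw [hadef, div_pow]
    nlinarith [sq_nonneg (2 - t)]
  have hb2 : Real.sqrt (1 - a ^ 2) ^ 2 = 1 - a ^ 2 := Real.sq_sqrt (by linarith)
  set b : ℝ := Real.sqrt (1 - a ^ 2) with hbdef
  have hbpos : 0 < b := Real.sqrt_pos.mpr (by linarith)
  set z₁ : ℂ := ⟨a, b⟩ with hz1
  set z₂ : ℂ := ⟨a, -b⟩ with hz2
  have hsum : z₁ + z₂ = ((2 - t : ℝ) : ℂ) := by
    apply Complex.ext
    · show a + a = 2 - t
      rw [hadef]; ring
    · show b + -b = 0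
      ring
  have hprod : z₁ * z₂ = 1 := by
    apply Complex.ext
    · show a * a - b * -b = 1
      nlinarith
    · show a * -b + b * a = 0
      ring
  have hcp : (M.map (algebraMap ℝ ℂ)).charpoly = (X - Polynomial.C z₁) * (X - Polynomial.C z₂) := by
    rw [charpoly_fin_two', htrC, hdetC, ← hsum, ← hprod, map_add, _root_.map_mul]
    ring
  have habs1 : ‖z₁‖ = 1 := by
    rw [Complex.norm_def, Complex.normSq_mk]
    rw [show a * a + b * b = 1 by nlinarith, Real.sqrt_one]
  have habs2 : ‖z₂‖ = 1 := by
    rw [Complex.norm_def, Complex.normSq_mk]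
    rw [show a * a + -b * -b = 1 by nlinarith, Real.sqrt_one]
  refine ⟨hdet, htr, ?_, ⟨z₁, z₂, ?_, hbpos.ne', ?_, hcp⟩, ?_⟩
  · rw [htr, abs_lt]
    constructor <;> linarith
  · intro hEq
    have : b = -b := congrArg Complex.im hEq
    linarith
  · show -b ≠ 0
    simpa using hbpos.ne'
  · intro z hz
    rw [hcp] at hz
    simp only [Polynomial.IsRoot, Polynomial.eval_mul, Polynomial.eval_sub, Polynomial.eval_X,
      Polynomial.eval_C, mul_eq_zero, sub_eq_zero] at hz
    rcases hz with rfl | rfl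
    · exact habs1
    · exact habs2
end

section
/- Let d ∈ ℕ, h ∈ ℝ, and let N : ℝ → ℝ be twice differentiable. Define g : (ℝ^d × ℝ^d × ℝ × ℝ) → (ℝ^d × ℝ^d × ℝ × ℝ) by g(x, y, t, ε) = (x + N(t)·y, y, t + h, ε − (1/2)·N'(t)·‖y‖²). Then g is differentiable and preserves the canonical symplectic bilinear form: for every point p and every pair of tangent vectors v = (δx, δy, δt, δε) and w = (δx', δy', δt', δε'), one has ω(Dg_p v, Dg_p w) = ω(v, w), where ω((δx, δy, δt, δε), (δx', δy', δt', δε')) = ⟨δy', δx⟩ − ⟨δy, δx'⟩ + δε'·δt − δε·δt' and Dg_p denotes the Fréchet derivative of g at p. -/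
open RealInnerProductSpace

/-- The coordinate expression of the canonical symplectic 2-form
`Σᵢ dyᵢ ∧ dxᵢ + dε ∧ dt` on `ℝ^d × ℝ^d × ℝ × ℝ`. -/
noncomputable def canonicalSymplecticForm (d : ℕ)
    (v w : EuclideanSpace ℝ (Fin d) × EuclideanSpace ℝ (Fin d) × ℝ × ℝ) : ℝ :=
  ⟪w.2.1, v.1⟫ - ⟪v.2.1, w.1⟫ + w.2.2.2 * v.2.2.1 - v.2.2.2 * w.2.2.1

/-- the numerical substitute for the flow of the Hamiltonian subsystem,
`g(x, y, t, ε) = (x + N(t)·y, y, t + h, ε − (1/2)·N'(t)·‖y‖²)`, is differentiable and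
its derivative preserves the canonical symplectic bilinear form at every point. -/
theorem stmt3 (d : ℕ) (h : ℝ) (N : ℝ → ℝ)
    (hN : Differentiable ℝ N) (hN' : Differentiable ℝ (deriv N)) :
    let g : (EuclideanSpace ℝ (Fin d) × EuclideanSpace ℝ (Fin d) × ℝ × ℝ) →
        (EuclideanSpace ℝ (Fin d) × EuclideanSpace ℝ (Fin d) × ℝ × ℝ) :=
      fun p => (p.1 + N p.2.2.1 • p.2.1, p.2.1, p.2.2.1 + h,
        p.2.2.2 - (1 / 2) * deriv N p.2.2.1 * ‖p.2.1‖ ^ 2)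
    Differentiable ℝ g ∧
      ∀ p v w, canonicalSymplecticForm d (fderiv ℝ g p v) (fderiv ℝ g p w) =
        canonicalSymplecticForm d v w := by
  intro g
  have key : ∀ p : EuclideanSpace ℝ (Fin d) × EuclideanSpace ℝ (Fin d) × ℝ × ℝ,
      ∃ D : (EuclideanSpace ℝ (Fin d) × EuclideanSpace ℝ (Fin d) × ℝ × ℝ) →L[ℝ]
          (EuclideanSpace ℝ (Fin d) × EuclideanSpace ℝ (Fin d) × ℝ × ℝ),
        HasFDerivAt g D p ∧
        ∀ v, D v = (v.1 + N p.2.2.1 • v.2.1 + (v.2.2.1 * deriv N p.2.2.1) • p.2.1,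
          v.2.1, v.2.2.1,
          v.2.2.2 - (1 / 2 * (v.2.2.1 * deriv (deriv N) p.2.2.1) * ‖p.2.1‖ ^ 2
            + 1 / 2 * deriv N p.2.2.1 * (2 * ⟪p.2.1, v.2.1⟫))) := by
    intro p
    have ht : HasFDerivAt (𝕜 := ℝ) (fun q : EuclideanSpace ℝ (Fin d) × EuclideanSpace ℝ (Fin d) × ℝ × ℝ
        => q.2.2.1) _ p := (hasFDerivAt_fst.comp p (hasFDerivAt_snd.comp p hasFDerivAt_snd))
    have hy : HasFDerivAt (𝕜 := ℝ) (fun q : EuclideanSpace ℝ (Fin d) × EuclideanSpace ℝ (Fin d) × ℝ × ℝ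
        => q.2.1) _ p := (hasFDerivAt_fst.comp p hasFDerivAt_snd)
    have he : HasFDerivAt (𝕜 := ℝ) (fun q : EuclideanSpace ℝ (Fin d) × EuclideanSpace ℝ (Fin d) × ℝ × ℝ
        => q.2.2.2) _ p := (hasFDerivAt_snd.comp p (hasFDerivAt_snd.comp p hasFDerivAt_snd))
    have hNt : HasFDerivAt (𝕜 := ℝ) (fun q : EuclideanSpace ℝ (Fin d) × EuclideanSpace ℝ (Fin d) × ℝ × ℝ
        => N q.2.2.1) _ p := ((hN p.2.2.1).hasDerivAt.hasFDerivAt).comp p ht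
    have hN't : HasFDerivAt (𝕜 := ℝ) (fun q : EuclideanSpace ℝ (Fin d) × EuclideanSpace ℝ (Fin d) × ℝ × ℝ
        => deriv N q.2.2.1) _ p := HasFDerivAt.comp (g := deriv N) p ((hN' p.2.2.1).hasDerivAt.hasFDerivAt) ht
    have hnorm : HasFDerivAt (𝕜 := ℝ) (fun q : EuclideanSpace ℝ (Fin d) × EuclideanSpace ℝ (Fin d) × ℝ × ℝ
        => ‖q.2.1‖ ^ 2) _ p := hy.norm_sq
    refine ⟨_, HasFDerivAt.prodMk (hasFDerivAt_fst.add (hNt.smul hy)) (HasFDerivAt.prodMk hy (HasFDerivAt.prodMk (ht.add_const h)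
      (he.sub (HasFDerivAt.mul (HasFDerivAt.const_mul hN't (1/2)) hnorm)))), fun v => ?_⟩
    ext <;>
      simp [ContinuousLinearMap.smulRight_apply, real_inner_comm] <;>
      ring
  constructor
  · exact fun p => ((key p).choose_spec.1).differentiableAt
  · intro p v w
    obtain ⟨D, hD, hDapp⟩ := key p
    rw [hD.fderiv, hDapp v, hDapp w]
    simp only [canonicalSymplecticForm, inner_add_right, inner_add_left, inner_smul_right,
      inner_smul_left, RCLike.conj_to_real]
    rw [real_inner_comm p.2.1 v.2.1, real_inner_comm p.2.1 w.2.1, real_inner_comm v.2.1 w.2.1]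
    ring
end

section
/- Let f : ℝ^d → ℝ be convex and continuously differentiable with a minimizer x* and f* = f(x*). Let r > 0, 0 ≤ α ≤ 1, t₀ > 0, and set ξ'(t) = r/t^α. Let A, B, C, D : [t₀, ∞) → [0, ∞) be differentiable and satisfy, for all t ≥ t₀: (I′) (1/2)·D'(t) − ξ'(t)·D(t) + A(t)B(t) ≤ 0; (II₁′) B(t)·B'(t) ≤ 0; (II₂′) D'(t) − A(t)B(t) ≤ 0; (III′) D(t) − A(t)² − C(t) = 0; (IV′) (d/dt)(A(t)B(t)) − ξ'(t)·A(t)B(t) + B(t)² = 0. Then for every twice differentiable solution x : [t₀, ∞) → ℝ^d of ẍ(t) + (r/t^α)·ẋ(t) + ∇f(x(t)) = 0, the function L(t) = (1/2)‖A(t)ẋ(t) + B(t)(x(t) − x*)‖² + (1/2)C(t)‖ẋ(t)‖² + D(t)(f(x(t)) − f*) satisfies L'(t) ≤ 0 for all t ≥ t₀. -/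
open RealInnerProductSpace

/-- if the differentiable nonnegative coefficient functions
`A, B, C, D` satisfy conditions (I′), (II₁′), (II₂′), (III′), (IV′), then the
Lyapunov function `L` is differentiable with nonpositive derivative along every
solution of the (α, r)-damped system `ẍ + (r/t^α)ẋ + ∇f(x) = 0` on `[t₀, ∞)`. -/
theorem stmt6 (d : ℕ) (f : EuclideanSpace ℝ (Fin d) → ℝ) (hf : ContDiff ℝ 1 f)
    (hconv : ∀ z y : EuclideanSpace ℝ (Fin d), 0 ≤ f y - f z - ⟪gradient f z, y - z⟫)
    (xstar : EuclideanSpace ℝ (Fin d)) (hmin : ∀ y, f xstar ≤ f y)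
    (r α t₀ : ℝ) (hr : 0 < r) (hα0 : 0 ≤ α) (hα1 : α ≤ 1) (ht₀ : 0 < t₀)
    (A B C D A' B' C' D' : ℝ → ℝ)
    (hA : ∀ t ∈ Set.Ici t₀, HasDerivWithinAt A (A' t) (Set.Ici t₀) t)
    (hB : ∀ t ∈ Set.Ici t₀, HasDerivWithinAt B (B' t) (Set.Ici t₀) t)
    (hC : ∀ t ∈ Set.Ici t₀, HasDerivWithinAt C (C' t) (Set.Ici t₀) t)
    (hD : ∀ t ∈ Set.Ici t₀, HasDerivWithinAt D (D' t) (Set.Ici t₀) t)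
    (hApos : ∀ t ∈ Set.Ici t₀, 0 ≤ A t) (hBpos : ∀ t ∈ Set.Ici t₀, 0 ≤ B t)
    (hCpos : ∀ t ∈ Set.Ici t₀, 0 ≤ C t) (hDpos : ∀ t ∈ Set.Ici t₀, 0 ≤ D t)
    (hI : ∀ t ∈ Set.Ici t₀, (1 / 2) * D' t - (r / t ^ α) * D t + A t * B t ≤ 0)
    (hII₁ : ∀ t ∈ Set.Ici t₀, B t * B' t ≤ 0)
    (hII₂ : ∀ t ∈ Set.Ici t₀, D' t - A t * B t ≤ 0)
    (hIII : ∀ t ∈ Set.Ici t₀, D t - A t ^ 2 - C t = 0)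
    (hIV : ∀ t ∈ Set.Ici t₀,
      (A' t * B t + A t * B' t) - (r / t ^ α) * (A t * B t) + B t ^ 2 = 0)
    (x v a : ℝ → EuclideanSpace ℝ (Fin d))
    (hx : ∀ t ∈ Set.Ici t₀, HasDerivWithinAt x (v t) (Set.Ici t₀) t)
    (hv : ∀ t ∈ Set.Ici t₀, HasDerivWithinAt v (a t) (Set.Ici t₀) t)
    (hode : ∀ t ∈ Set.Ici t₀, a t + (r / t ^ α) • v t + gradient f (x t) = 0) :
    ∀ t ∈ Set.Ici t₀, ∃ L' : ℝ,
      HasDerivWithinAt (fun s =>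
        (1 / 2) * ‖A s • v s + B s • (x s - xstar)‖ ^ 2
          + (1 / 2) * C s * ‖v s‖ ^ 2 + D s * (f (x s) - f xstar)) L' (Set.Ici t₀) t ∧
      L' ≤ 0 := by
  intro t ht
  have ht0 : (0:ℝ) < t := lt_of_lt_of_le ht₀ ht
  set ξ : ℝ := r / t ^ α with hξdef
  have hξ : 0 ≤ ξ := div_nonneg hr.le (Real.rpow_pos_of_pos ht0 α).le
  set g : EuclideanSpace ℝ (Fin d) := gradient f (x t) with hg
  -- the ODE solved for `a t`
  have hae : a t = -(ξ • v t + g) := by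
    have h := hode t ht
    rwa [add_assoc, add_eq_zero_iff_eq_neg] at h
  -- derivative of `f ∘ x`
  have hdf : HasGradientAt f g (x t) :=
    ((hf.differentiable one_ne_zero) (x t)).hasGradientAt
  have hfx : HasDerivWithinAt (fun s => f (x s)) ⟪g, v t⟫ (Set.Ici t₀) t := by
    have h := hdf.hasFDerivAt.comp_hasDerivWithinAt t (hx t ht)
    exact h
  -- derivative of the main vector `w`
  have hxsub : HasDerivWithinAt (fun s => x s - xstar) (v t) (Set.Ici t₀) t :=
    (hx t ht).sub_const _
  have hw : HasDerivWithinAt (fun s => A s • v s + B s • (x s - xstar))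
      ((A t • a t + A' t • v t) + (B t • v t + B' t • (x t - xstar)))
      (Set.Ici t₀) t :=
    ((hA t ht).smul (hv t ht)).add ((hB t ht).smul hxsub)
  set wt : EuclideanSpace ℝ (Fin d) := A t • v t + B t • (x t - xstar) with hwt
  set w' : EuclideanSpace ℝ (Fin d) :=
    (A t • a t + A' t • v t) + (B t • v t + B' t • (x t - xstar)) with hw'
  -- the three pieces of the Lyapunov derivative
  have h1 : HasDerivWithinAt
      (fun s => (1/2) * ⟪A s • v s + B s • (x s - xstar), A s • v s + B s • (x s - xstar)⟫)
      ((1/2) * (⟪wt, w'⟫ + ⟪w', wt⟫)) (Set.Ici t₀) t :=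
    (hw.inner ℝ hw).const_mul (1/2)
  have h2 : HasDerivWithinAt (fun s => ((1/2) * C s) * ⟪v s, v s⟫)
      ((1/2 * C' t) * ⟪v t, v t⟫ + (1/2 * C t) * (⟪v t, a t⟫ + ⟪a t, v t⟫))
      (Set.Ici t₀) t :=
    ((hC t ht).const_mul (1/2)).mul ((hv t ht).inner ℝ (hv t ht))
  have h3 : HasDerivWithinAt (fun s => D s * (f (x s) - f xstar))
      (D' t * (f (x t) - f xstar) + D t * ⟪g, v t⟫) (Set.Ici t₀) t :=
    (hD t ht).mul (hfx.sub_const _)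
  have hL : HasDerivWithinAt
      (fun s => (1/2) * ⟪A s • v s + B s • (x s - xstar), A s • v s + B s • (x s - xstar)⟫
        + ((1/2) * C s) * ⟪v s, v s⟫ + D s * (f (x s) - f xstar))
      ((1/2) * (⟪wt, w'⟫ + ⟪w', wt⟫)
        + ((1/2 * C' t) * ⟪v t, v t⟫ + (1/2 * C t) * (⟪v t, a t⟫ + ⟪a t, v t⟫))
        + (D' t * (f (x t) - f xstar) + D t * ⟪g, v t⟫)) (Set.Ici t₀) t :=
    (h1.add h2).add h3
  refine ⟨_, hL.congr (fun s _ => ?_) ?_, ?_⟩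
  · rw [real_inner_self_eq_norm_sq, real_inner_self_eq_norm_sq]
  · rw [real_inner_self_eq_norm_sq, real_inner_self_eq_norm_sq]
  -- now the inequality
  · have hC'eq : C' t = D' t - 2 * A t * A' t := by
      have hA2 : HasDerivWithinAt (fun s => A s ^ 2) (2 * A t * A' t) (Set.Ici t₀) t := by
        have h : HasDerivWithinAt (fun s => A s * A s) _ (Set.Ici t₀) t := (hA t ht).mul (hA t ht)
        simp only [pow_two]
        convert h using 1; ring
      have hcombo : HasDerivWithinAt (fun s => D s - A s ^ 2 - C s)
          (D' t - 2 * A t * A' t - C' t) (Set.Ici t₀) t :=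
        ((hD t ht).sub hA2).sub (hC t ht)
      have hzero : HasDerivWithinAt (fun s => D s - A s ^ 2 - C s) 0 (Set.Ici t₀) t :=
        (hasDerivWithinAt_const t _ (0:ℝ)).congr (fun s hs => (hIII s hs))
          (hIII t ht)
      have e1 := hcombo.derivWithin (uniqueDiffOn_Ici t₀ t ht)
      have e2 := hzero.derivWithin (uniqueDiffOn_Ici t₀ t ht)
      rw [e2] at e1
      linarith
    have hgx : f (x t) - f xstar ≤ ⟪g, x t - xstar⟫ := by
      have h := hconv (x t) xstar
      rw [show xstar - x t = -(x t - xstar) by abel, inner_neg_right] at h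
      linarith
    have hF : 0 ≤ f (x t) - f xstar := sub_nonneg.2 (hmin _)
    have hIt := hI t ht
    have hII₁t := hII₁ t ht
    have hII₂t := hII₂ t ht
    have hIIIt := hIII t ht
    have hIVt := hIV t ht
    have hvv : 0 ≤ ⟪v t, v t⟫ := real_inner_self_nonneg
    have hxx : 0 ≤ ⟪x t - xstar, x t - xstar⟫ := real_inner_self_nonneg
    rw [hwt, hw', hae]
    simp only [inner_add_left, inner_add_right, inner_neg_left, inner_neg_right,
      real_inner_smul_left, real_inner_smul_right]
    rw [real_inner_comm (x t - xstar) (v t), real_inner_comm (v t) g,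
      real_inner_comm (x t - xstar) g]
    rw [← hξdef] at hIt hIVt
    have e1 : (A' t * B t + A t * B' t - ξ * (A t * B t) + B t ^ 2) * ⟪x t - xstar, v t⟫ = 0 :=
      mul_eq_zero_of_left hIVt _
    have e2 : (D t - A t ^ 2 - C t) * ⟪v t, g⟫ = 0 := mul_eq_zero_of_left hIIIt _
    have e3 : (D t - A t ^ 2 - C t) * (ξ * ⟪v t, v t⟫) = 0 := mul_eq_zero_of_left hIIIt _
    have e4 : (1 / 2 * D' t - ξ * D t + A t * B t) * ⟪v t, v t⟫ ≤ 0 :=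
      mul_nonpos_of_nonpos_of_nonneg hIt hvv
    have e5 : (B t * B' t) * ⟪x t - xstar, x t - xstar⟫ ≤ 0 :=
      mul_nonpos_of_nonpos_of_nonneg hII₁t hxx
    have hgx' : f (x t) - f xstar ≤ ⟪x t - xstar, g⟫ := by
      rwa [real_inner_comm]
    have e6 : (A t * B t) * ((f (x t) - f xstar) - ⟪x t - xstar, g⟫) ≤ 0 :=
      mul_nonpos_of_nonneg_of_nonpos (mul_nonneg (hApos t ht) (hBpos t ht)) (sub_nonpos.2 hgx')
    have e7 : (D' t - A t * B t) * (f (x t) - f xstar) ≤ 0 :=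
      mul_nonpos_of_nonpos_of_nonneg hII₂t hF
    have e8 : C' t * ⟪v t, v t⟫ = (D' t - 2 * A t * A' t) * ⟪v t, v t⟫ := by rw [hC'eq]
    linarith [e1, e2, e3, e4, e5, e6, e7, e8]
end

section
/- Let r > 0, 0 ≤ α < 1, and 0 < β ≤ 1/2, and define for t > 0: ξ(t) = (r/(1−α))·t^{1−α}, D(t) = e^{βξ(t)}, B(t) = √(βr·[(1−β)r·t^{1−α} + α]·t^{−α−1}·e^{βξ(t)}), A(t) = √((βr·t^{1−α}/((1−β)r·t^{1−α} + α))·e^{βξ(t)}), and C(t) = [1 − βr·t^{1−α}/((1−β)r·t^{1−α} + α)]·e^{βξ(t)}. Then for all t > 0: (a) A(t)·B(t) = D'(t); (b) A(t)² + C(t) = D(t); (c) (d/dt)(A(t)B(t)) − ξ'(t)·A(t)B(t) + B(t)² = 0; (d) (3/2)·D'(t) − ξ'(t)·D(t) ≤ 0; and (e) A(t) ≥ 0, B(t) ≥ 0, C(t) ≥ 0, D(t) > 0. -/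
/-- properties of the Lyapunov coefficient functions `A, B, C, D`
for the (α, r)-damped system with `0 ≤ α < 1` and `0 < β ≤ 1/2`. -/
theorem stmt7 (r α β : ℝ) (hr : 0 < r) (hα0 : 0 ≤ α) (hα1 : α < 1)
    (hβ0 : 0 < β) (hβ : β ≤ 1 / 2) :
    let ξ : ℝ → ℝ := fun t => r / (1 - α) * t ^ (1 - α)
    let D : ℝ → ℝ := fun t => Real.exp (β * ξ t)
    let B : ℝ → ℝ := fun t =>
      Real.sqrt (β * r * ((1 - β) * r * t ^ (1 - α) + α) * t ^ (-α - 1) * Real.exp (β * ξ t))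
    let A : ℝ → ℝ := fun t =>
      Real.sqrt (β * r * t ^ (1 - α) / ((1 - β) * r * t ^ (1 - α) + α) * Real.exp (β * ξ t))
    let C : ℝ → ℝ := fun t =>
      (1 - β * r * t ^ (1 - α) / ((1 - β) * r * t ^ (1 - α) + α)) * Real.exp (β * ξ t)
    ∀ t > (0 : ℝ),
      HasDerivAt D (A t * B t) t ∧
      A t ^ 2 + C t = D t ∧
      HasDerivAt (fun s => A s * B s) (r / t ^ α * (A t * B t) - B t ^ 2) t ∧
      (3 / 2) * (A t * B t) - r / t ^ α * D t ≤ 0 ∧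
      0 ≤ A t ∧ 0 ≤ B t ∧ 0 ≤ C t ∧ 0 < D t := by
  intro ξ D B A C t ht
  have h1α : (0:ℝ) < 1 - α := by linarith
  have h1β : (0:ℝ) < 1 - β := by linarith
  -- basic positivity facts at a general point s > 0
  have hu : ∀ s : ℝ, 0 < s → 0 < s ^ (1 - α) := fun s hs => Real.rpow_pos_of_pos hs _
  have hQ : ∀ s : ℝ, 0 < s → 0 < (1 - β) * r * s ^ (1 - α) + α := by
    intro s hs
    have h2 := mul_pos (mul_pos h1β hr) (hu s hs)
    linarith
  have hp : ∀ s : ℝ, 0 < s → 0 < s ^ (-α - 1) := fun s hs => Real.rpow_pos_of_pos hs _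
  have hta : ∀ s : ℝ, 0 < s → 0 < s ^ (-α) := fun s hs => Real.rpow_pos_of_pos hs _
  have hE : ∀ s : ℝ, 0 < Real.exp (β * ξ s) := fun s => Real.exp_pos _
  -- rpow splitting identities
  have hsplit1 : ∀ s : ℝ, 0 < s → s ^ (-α) = s ^ (-α - 1) * s := by
    intro s hs
    rw [← Real.rpow_add_one hs.ne' (-α - 1)]
    congr 1
    ring
  have hsplit2 : ∀ s : ℝ, 0 < s → s ^ (1 - α) = s ^ (-α - 1) * s ^ 2 := by
    intro s hs
    rw [← Real.rpow_two, ← Real.rpow_add hs]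
    congr 1
    ring
  -- the product A·B simplifies
  have hAB : ∀ s : ℝ, 0 < s → A s * B s = β * r * s ^ (-α) * Real.exp (β * ξ s) := by
    intro s hs
    have hQs := hQ s hs
    have hXnn : 0 ≤ β * r * s ^ (1 - α) / ((1 - β) * r * s ^ (1 - α) + α) *
        Real.exp (β * ξ s) := by
      have := mul_pos (div_pos (mul_pos (mul_pos hβ0 hr) (hu s hs)) hQs) (hE s)
      linarith
    show Real.sqrt _ * Real.sqrt _ = _
    rw [← Real.sqrt_mul hXnn]
    rw [show β * r * s ^ (1 - α) / ((1 - β) * r * s ^ (1 - α) + α) * Real.exp (β * ξ s) *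
        (β * r * ((1 - β) * r * s ^ (1 - α) + α) * s ^ (-α - 1) * Real.exp (β * ξ s)) =
        (β * r * s ^ (-α) * Real.exp (β * ξ s)) ^ 2 by
      field_simp
      rw [hsplit1 s hs, hsplit2 s hs]
      ring]
    exact Real.sqrt_sq (by positivity)
  -- B squared
  have hB2 : B t ^ 2 = β * r * ((1 - β) * r * t ^ (1 - α) + α) * t ^ (-α - 1) *
      Real.exp (β * ξ t) := by
    refine Real.sq_sqrt ?_
    have := mul_pos (mul_pos (mul_pos (mul_pos hβ0 hr) (hQ t ht)) (hp t ht)) (hE t)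
    linarith
  -- A squared
  have hA2 : A t ^ 2 = β * r * t ^ (1 - α) / ((1 - β) * r * t ^ (1 - α) + α) *
      Real.exp (β * ξ t) := by
    refine Real.sq_sqrt ?_
    have := mul_pos (div_pos (mul_pos (mul_pos hβ0 hr) (hu t ht)) (hQ t ht)) (hE t)
    linarith
  -- derivative of β·ξ
  have hXi : HasDerivAt (fun s : ℝ => β * ξ s) (β * r * t ^ (-α)) t := by
    have hpow : HasDerivAt (fun s : ℝ => s ^ (1 - α)) ((1 - α) * t ^ (1 - α - 1)) t :=
      Real.hasDerivAt_rpow_const (Or.inl ht.ne')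
    have h := (hpow.const_mul (r / (1 - α))).const_mul β
    refine h.congr_deriv ?_
    rw [show (1 - α - 1 : ℝ) = -α by ring]
    field_simp
  -- derivative of D
  have hD : HasDerivAt D (β * r * t ^ (-α) * Real.exp (β * ξ t)) t := by
    have := hXi.exp
    convert this using 1
    ring
  have hdiv : r / t ^ α = r * t ^ (-α) := by
    rw [Real.rpow_neg ht.le]
    ring
  refine ⟨?_, ?_, ?_, ?_, Real.sqrt_nonneg _, Real.sqrt_nonneg _, ?_, hE t⟩
  · rw [hAB t ht]; exact hD
  · rw [hA2]; show _ + (1 - β * r * t ^ (1 - α) / ((1 - β) * r * t ^ (1 - α) + α)) *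
      Real.exp (β * ξ t) = Real.exp (β * ξ t)
    ring
  · -- derivative of A·B
    have hpow2 : HasDerivAt (fun s : ℝ => s ^ (-α)) (-α * t ^ (-α - 1)) t :=
      Real.hasDerivAt_rpow_const (Or.inl ht.ne')
    have hg : HasDerivAt (fun s : ℝ => β * r * s ^ (-α) * Real.exp (β * ξ s))
        ((β * r * (-α * t ^ (-α - 1))) * Real.exp (β * ξ t) +
          (β * r * t ^ (-α)) * (Real.exp (β * ξ t) * (β * r * t ^ (-α)))) t :=
      (hpow2.const_mul (β * r)).mul hXi.exp
    have hev : (fun s => A s * B s) =ᶠ[nhds t] fun s : ℝ =>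
        β * r * s ^ (-α) * Real.exp (β * ξ s) := by
      filter_upwards [isOpen_Ioi.mem_nhds ht] with s hs
      exact hAB s hs
    have := hg.congr_of_eventuallyEq hev
    refine this.congr_deriv ?_
    rw [hAB t ht, hB2, hdiv, hsplit1 t ht, hsplit2 t ht]
    ring
  · rw [hAB t ht, hdiv]
    show (3:ℝ)/2 * (β * r * t ^ (-α) * Real.exp (β * ξ t)) -
      r * t ^ (-α) * Real.exp (β * ξ t) ≤ 0
    have h := mul_nonneg (mul_nonneg (by linarith : (0:ℝ) ≤ 1 - 3/2 * β) hr.le)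
      (mul_pos (hta t ht) (hE t)).le
    nlinarith [h]
  · -- C nonneg
    have hle : β * r * t ^ (1 - α) / ((1 - β) * r * t ^ (1 - α) + α) ≤ 1 := by
      rw [div_le_one (hQ t ht)]
      have h := mul_nonneg (mul_nonneg (by linarith : (0:ℝ) ≤ 1 - 2 * β) hr.le) (hu t ht).le
      linarith
    have : (0:ℝ) ≤ 1 - β * r * t ^ (1 - α) / ((1 - β) * r * t ^ (1 - α) + α) := by linarith
    exact mul_nonneg this (hE t).le
end

section
/- Let r > 0, 0 ≤ α < 1, and 0 < β < 1. Define for t > 0: ξ(t) = (r/(1−α))·t^{1−α} and G(t) = B(t)² = βr·[(1−β)r·t^{1−α} + α]·t^{−α−1}·e^{βξ(t)}. Then for all t > 0, G'(t) = βr·[β(1−β)r²·t^{2(1−α)} − (2−3β)·rα·t^{1−α} − α(1+α)]·t^{−α−2}·e^{βξ(t)}, and there exists t* > 0 such that G'(t) > 0 for all t > t*. In particular, the condition B(t)·B'(t) ≤ 0 fails for all sufficiently large t. -/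
/-- for `0 ≤ α < 1`, the derivative of `G = B²` has the stated
explicit form and is eventually positive, so the condition `B·B' ≤ 0` fails for
all sufficiently large times. -/
theorem stmt9 (r α β : ℝ) (hr : 0 < r) (hα0 : 0 ≤ α) (hα1 : α < 1)
    (hβ0 : 0 < β) (hβ1 : β < 1) :
    let ξ : ℝ → ℝ := fun t => r / (1 - α) * t ^ (1 - α)
    let G : ℝ → ℝ := fun t =>
      β * r * ((1 - β) * r * t ^ (1 - α) + α) * t ^ (-α - 1) * Real.exp (β * ξ t)
    let G' : ℝ → ℝ := fun t =>
      β * r * (β * (1 - β) * r ^ 2 * t ^ (2 * (1 - α)) - (2 - 3 * β) * r * α * t ^ (1 - α)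
        - α * (1 + α)) * t ^ (-α - 2) * Real.exp (β * ξ t)
    (∀ t > (0 : ℝ), HasDerivAt G (G' t) t) ∧
    ∃ tstar > (0 : ℝ), ∀ t > tstar, 0 < G' t ∧
      ¬ (Real.sqrt (G t) * deriv (fun s => Real.sqrt (G s)) t ≤ 0) := by
  intro ξ G G'
  have h1α : (0:ℝ) < 1 - α := by linarith
  have h1α' : (1:ℝ) - α ≠ 0 := ne_of_gt h1α
  have hGdef : ∀ s : ℝ, G s = β * r * ((1 - β) * r * s ^ (1 - α) + α) * s ^ (-α - 1) *
      Real.exp (β * (r / (1 - α) * s ^ (1 - α))) := fun s => rfl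
  have hG'def : ∀ s : ℝ, G' s = β * r * (β * (1 - β) * r ^ 2 * s ^ (2 * (1 - α))
      - (2 - 3 * β) * r * α * s ^ (1 - α) - α * (1 + α)) * s ^ (-α - 2) *
      Real.exp (β * (r / (1 - α) * s ^ (1 - α))) := fun s => rfl
  have key : ∀ t > (0:ℝ), HasDerivAt G (G' t) t := by
    intro t ht
    have ht' : t ≠ 0 := ne_of_gt ht
    have hpow : ∀ (x : ℝ) (n : ℕ), t ^ (x - (n:ℝ)) = t ^ x / t ^ n := fun x n => by
      rw [Real.rpow_sub ht, Real.rpow_natCast]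
    have e1 : t ^ (1 - α - 1) = t ^ (1 - α) / t ^ (1:ℕ) := by
      rw [show (1 - α - 1 : ℝ) = (1 - α) - ((1:ℕ):ℝ) by push_cast; ring, hpow]
    have e2 : t ^ (-α - 1) = t ^ (1 - α) / t ^ (2:ℕ) := by
      rw [show (-α - 1 : ℝ) = (1 - α) - ((2:ℕ):ℝ) by push_cast; ring, hpow]
    have e3 : t ^ (-α - 1 - 1) = t ^ (1 - α) / t ^ (3:ℕ) := by
      rw [show (-α - 1 - 1 : ℝ) = (1 - α) - ((3:ℕ):ℝ) by push_cast; ring, hpow]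
    have e4 : t ^ (-α - 2) = t ^ (1 - α) / t ^ (3:ℕ) := by
      rw [show (-α - 2 : ℝ) = (1 - α) - ((3:ℕ):ℝ) by push_cast; ring, hpow]
    have e5 : t ^ (2 * (1 - α)) = t ^ (1 - α) * t ^ (1 - α) := by
      rw [show (2 * (1 - α) : ℝ) = (1 - α) + (1 - α) by ring, Real.rpow_add ht]
    have h1 : HasDerivAt (fun s : ℝ => s ^ (1 - α)) ((1 - α) * t ^ (1 - α - 1)) t :=
      Real.hasDerivAt_rpow_const (Or.inl ht')
    have hv : HasDerivAt (fun s : ℝ => s ^ (-α - 1)) ((-α - 1) * t ^ (-α - 1 - 1)) t :=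
      Real.hasDerivAt_rpow_const (Or.inl ht')
    have hu : HasDerivAt (fun s : ℝ => (1 - β) * r * s ^ (1 - α) + α)
        ((1 - β) * r * ((1 - α) * t ^ (1 - α - 1))) t :=
      (h1.const_mul ((1 - β) * r)).add_const α
    have hw : HasDerivAt (fun s : ℝ => Real.exp (β * (r / (1 - α) * s ^ (1 - α))))
        (Real.exp (β * (r / (1 - α) * t ^ (1 - α))) *
          (β * (r / (1 - α) * ((1 - α) * t ^ (1 - α - 1))))) t :=
      ((h1.const_mul (r / (1 - α))).const_mul β).exp
    have H := ((hu.const_mul (β * r)).mul hv).mul hw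
    have hD : G' t =
        ((β * r * ((1 - β) * r * ((1 - α) * t ^ (1 - α - 1))) * t ^ (-α - 1)
          + β * r * ((1 - β) * r * t ^ (1 - α) + α) * ((-α - 1) * t ^ (-α - 1 - 1)))
          * Real.exp (β * (r / (1 - α) * t ^ (1 - α)))
        + β * r * ((1 - β) * r * t ^ (1 - α) + α) * t ^ (-α - 1) *
          (Real.exp (β * (r / (1 - α) * t ^ (1 - α))) *
            (β * (r / (1 - α) * ((1 - α) * t ^ (1 - α - 1)))))) := by
      rw [hG'def, e1, e2, e3, e4, e5]
      field_simp
      ring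
    rw [hD]
    exact H
  refine ⟨key, ?_⟩
  have hapos : 0 < β * (1 - β) * r ^ 2 :=
    mul_pos (mul_pos hβ0 (by linarith)) (pow_pos hr 2)
  set b : ℝ := (2 - 3 * β) * r * α with hbdef
  set c : ℝ := α * (1 + α) with hcdef
  set S : ℝ := max 1 ((|b| + c + 1) / (β * (1 - β) * r ^ 2)) with hSdef
  have hS1 : (1:ℝ) ≤ S := le_max_left _ _
  have hSpos : (0:ℝ) < S := lt_of_lt_of_le one_pos hS1
  have htstarpos : (0:ℝ) < S ^ ((1 - α)⁻¹) := Real.rpow_pos_of_pos hSpos _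
  refine ⟨S ^ ((1 - α)⁻¹), htstarpos, ?_⟩
  intro t ht
  have ht0 : 0 < t := lt_trans htstarpos ht
  have hPge : S < t ^ (1 - α) := by
    have h := Real.rpow_lt_rpow htstarpos.le ht h1α
    rwa [← Real.rpow_mul hSpos.le, inv_mul_cancel₀ h1α', Real.rpow_one] at h
  have hPpos : 0 < t ^ (1 - α) := Real.rpow_pos_of_pos ht0 _
  have hc0 : 0 ≤ c := by rw [hcdef]; nlinarith
  have hb0 : b ≤ |b| := le_abs_self _
  have hS2 : (|b| + c + 1) / (β * (1 - β) * r ^ 2) ≤ S := le_max_right _ _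
  have hS2' : |b| + c + 1 ≤ S * (β * (1 - β) * r ^ 2) := (div_le_iff₀ hapos).mp hS2
  have h₁ : |b| + c + 1 < β * (1 - β) * r ^ 2 * t ^ (1 - α) := by
    nlinarith [mul_pos hapos (sub_pos.mpr hPge)]
  have h₂ : (1:ℝ) ≤ t ^ (1 - α) := le_trans hS1 hPge.le
  have hQ : 0 < β * (1 - β) * r ^ 2 * (t ^ (1 - α)) ^ 2 - b * t ^ (1 - α) - c := by
    nlinarith [mul_le_mul_of_nonneg_left h₁.le hPpos.le,
      mul_le_mul_of_nonneg_right hb0 hPpos.le,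
      mul_nonneg hc0 (by linarith : (0:ℝ) ≤ t ^ (1 - α) - 1)]
  have e5 : t ^ (2 * (1 - α)) = t ^ (1 - α) * t ^ (1 - α) := by
    rw [show (2 * (1 - α) : ℝ) = (1 - α) + (1 - α) by ring, Real.rpow_add ht0]
  have hG'eq : G' t = (β * r) *
      (β * (1 - β) * r ^ 2 * (t ^ (1 - α)) ^ 2 - b * t ^ (1 - α) - c) *
      (t ^ (-α - 2) * Real.exp (β * (r / (1 - α) * t ^ (1 - α)))) := by
    rw [hG'def, e5, hbdef, hcdef]; ring
  have hG'pos : 0 < G' t := by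
    rw [hG'eq]
    exact mul_pos (mul_pos (mul_pos hβ0 hr) hQ)
      (mul_pos (Real.rpow_pos_of_pos ht0 _) (Real.exp_pos _))
  have hupos : 0 < (1 - β) * r * t ^ (1 - α) + α := by
    nlinarith [mul_pos (mul_pos (by linarith : (0:ℝ) < 1 - β) hr) hPpos]
  have hGpos : 0 < G t := by
    rw [hGdef]
    exact mul_pos (mul_pos (mul_pos (mul_pos hβ0 hr) hupos)
      (Real.rpow_pos_of_pos ht0 _)) (Real.exp_pos _)
  refine ⟨hG'pos, ?_⟩
  have hd := (key t ht0).sqrt (ne_of_gt hGpos)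
  rw [not_le, hd.deriv]
  have hs : 0 < Real.sqrt (G t) := Real.sqrt_pos.mpr hGpos
  have : Real.sqrt (G t) * (G' t / (2 * Real.sqrt (G t))) = G' t / 2 := by
    field_simp
  rw [this]
  linarith
end

section
/- Let μ > 0, r > 0, 0 ≤ α < 1, and 0 < β ≤ 1/2. Define for t > 0: ξ(t) = (r/(1−α))·t^{1−α}, D(t) = e^{βξ(t)}, B(t)² = βr·[(1−β)r·t^{1−α} + α]·t^{−α−1}·e^{βξ(t)}, and P(t) = μt² − (1−β)β·r²·t^{2(1−α)} + (2−3β)·rα·t^{1−α} + α(α+1). Then for all t > 0, (d/dt)(B(t)²) − μ·D'(t) = −βr·P(t)·t^{−α−2}·e^{βξ(t)}. Consequently, if f : ℝ^d → ℝ is continuously differentiable and μ-strongly convex with minimizer x* and f* = f(x*), then for every t > 0 with P(t) ≥ 0 and every z ∈ ℝ^d: B(t)B'(t)·‖z − x*‖² − D'(t)·[f* − f(z) − ⟨∇f(z), x* − z⟩] ≤ −(1/2)·βr·P(t)·t^{−α−2}·e^{βξ(t)}·‖z − x*‖² ≤ 0. -/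
open RealInnerProductSpace

lemma keyDeriv (μ r α β t : ℝ) (hα1 : α < 1) (ht : 0 < t) :
    HasDerivAt (fun s : ℝ => β * r * ((1 - β) * r * s ^ (1 - α) + α) * s ^ (-α - 1)
        * Real.exp (β * (r / (1 - α) * s ^ (1 - α))))
      (μ * (β * r / t ^ α * Real.exp (β * (r / (1 - α) * t ^ (1 - α))))
        - β * r * (μ * t ^ 2 - (1 - β) * β * r ^ 2 * t ^ (2 * (1 - α))
            + (2 - 3 * β) * r * α * t ^ (1 - α) + α * (α + 1)) * t ^ (-α - 2)
          * Real.exp (β * (r / (1 - α) * t ^ (1 - α)))) t := by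
  have hne : t ≠ 0 := ht.ne'
  have h1 : HasDerivAt (fun s : ℝ => s ^ (1 - α)) ((1 - α) * t ^ (1 - α - 1)) t :=
    Real.hasDerivAt_rpow_const (Or.inl hne)
  have h2 : HasDerivAt (fun s : ℝ => s ^ (-α - 1)) ((-α - 1) * t ^ (-α - 1 - 1)) t :=
    Real.hasDerivAt_rpow_const (Or.inl hne)
  have hξ : HasDerivAt (fun s : ℝ => β * (r / (1 - α) * s ^ (1 - α)))
      (β * (r / (1 - α) * ((1 - α) * t ^ (1 - α - 1)))) t :=
    (h1.const_mul (r / (1 - α))).const_mul β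
  have hD := hξ.exp
  have hP1 : HasDerivAt (fun s : ℝ => β * r * ((1 - β) * r * s ^ (1 - α) + α))
      (β * r * ((1 - β) * r * ((1 - α) * t ^ (1 - α - 1)))) t := by
    simpa using ((h1.const_mul ((1 - β) * r)).add_const α).const_mul (β * r)
  have hg := (hP1.mul h2).mul hD
  refine hg.congr_deriv ?_
  simp only [Pi.mul_apply]
  -- algebra
  set A := t ^ (-α) with hA
  have hApos : 0 < A := Real.rpow_pos_of_pos ht _
  have e1 : t ^ (1 - α) = t * A := by
    rw [show (1 - α) = 1 + (-α) by ring, Real.rpow_add ht, Real.rpow_one]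
  have e2 : t ^ (1 - α - 1) = A := by rw [show 1 - α - 1 = -α by ring]
  have e3 : t ^ (-α - 1) = A * t⁻¹ := by
    rw [show -α - 1 = -α + (-1) by ring, Real.rpow_add ht, Real.rpow_neg_one]
  have e4 : t ^ (-α - 1 - 1) = A * t⁻¹ * t⁻¹ := by
    rw [show -α - 1 - 1 = -α + (-1) + (-1) by ring, Real.rpow_add ht, Real.rpow_add ht,
      Real.rpow_neg_one]
  have e5 : t ^ (-α - 2) = A * t⁻¹ * t⁻¹ := by
    rw [show -α - 2 = -α + (-1) + (-1) by ring, Real.rpow_add ht, Real.rpow_add ht,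
      Real.rpow_neg_one]
  have e6 : t ^ (2 * (1 - α)) = t * A * (t * A) := by
    rw [show 2 * (1 - α) = (1 - α) + (1 - α) by ring, Real.rpow_add ht, e1]
  have e7 : t ^ α = A⁻¹ := by
    rw [hA, show -α = -α by rfl, Real.rpow_neg ht.le, inv_inv]
  rw [e1, e2, e3, e4, e5, e6, e7]
  have h1α : (1 : ℝ) - α ≠ 0 := by linarith
  field_simp
  ring
lemma gpos (r α β t : ℝ) (hr : 0 < r) (hα0 : 0 ≤ α) (hβ0 : 0 < β) (hβ : β ≤ 1 / 2)
    (ht : 0 < t) :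
    0 < β * r * ((1 - β) * r * t ^ (1 - α) + α) * t ^ (-α - 1)
      * Real.exp (β * (r / (1 - α) * t ^ (1 - α))) := by
  have h1 : (0:ℝ) < (1 - β) * r * t ^ (1 - α) + α := by
    have h1β : (0:ℝ) < 1 - β := by linarith
    have := mul_pos (mul_pos h1β hr) (Real.rpow_pos_of_pos ht (1 - α))
    linarith
  have h2 := Real.rpow_pos_of_pos ht (-α - 1)
  positivity

/-- the identity `(d/dt)(B(t)²) − μ·D'(t) = −βr·P(t)·t^{−α−2}·e^{βξ(t)}`
and the resulting estimate on the strongly convex terms of the Lyapunov derivative. -/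
theorem stmt11 (μ r α β : ℝ) (hμ : 0 < μ) (hr : 0 < r) (hα0 : 0 ≤ α) (hα1 : α < 1)
    (hβ0 : 0 < β) (hβ : β ≤ 1 / 2) :
    let ξ : ℝ → ℝ := fun t => r / (1 - α) * t ^ (1 - α)
    let D : ℝ → ℝ := fun t => Real.exp (β * ξ t)
    let B : ℝ → ℝ := fun t =>
      Real.sqrt (β * r * ((1 - β) * r * t ^ (1 - α) + α) * t ^ (-α - 1) * Real.exp (β * ξ t))
    let P : ℝ → ℝ := fun t => μ * t ^ 2 - (1 - β) * β * r ^ 2 * t ^ (2 * (1 - α))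
      + (2 - 3 * β) * r * α * t ^ (1 - α) + α * (α + 1)
    (∀ t > (0 : ℝ),
      HasDerivAt D (β * r / t ^ α * D t) t ∧
      HasDerivAt (fun s => B s ^ 2)
        (μ * (β * r / t ^ α * D t) - β * r * P t * t ^ (-α - 2) * D t) t) ∧
    (∀ d : ℕ, ∀ f : EuclideanSpace ℝ (Fin d) → ℝ, ContDiff ℝ 1 f →
      (∀ z y : EuclideanSpace ℝ (Fin d),
        μ / 2 * ‖y - z‖ ^ 2 ≤ f y - f z - ⟪gradient f z, y - z⟫) →
      ∀ xstar : EuclideanSpace ℝ (Fin d), (∀ y, f xstar ≤ f y) →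
      ∀ t > (0 : ℝ), 0 ≤ P t → ∀ z : EuclideanSpace ℝ (Fin d),
        B t * deriv B t * ‖z - xstar‖ ^ 2
            - (β * r / t ^ α * D t) * (f xstar - f z - ⟪gradient f z, xstar - z⟫)
          ≤ -(1 / 2 * (β * r) * P t * t ^ (-α - 2) * D t) * ‖z - xstar‖ ^ 2 ∧
        -(1 / 2 * (β * r) * P t * t ^ (-α - 2) * D t) * ‖z - xstar‖ ^ 2 ≤ 0) := by
  intro ξ D B P
  -- notation for the quantity under the square root
  set g : ℝ → ℝ := fun t => β * r * ((1 - β) * r * t ^ (1 - α) + α) * t ^ (-α - 1)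
      * Real.exp (β * (r / (1 - α) * t ^ (1 - α))) with hg
  have hgB : ∀ s : ℝ, B s = Real.sqrt (g s) := fun s => rfl
  have hDD : ∀ s : ℝ, D s = Real.exp (β * (r / (1 - α) * s ^ (1 - α))) := fun s => rfl
  have hDderiv : ∀ t : ℝ, 0 < t → HasDerivAt D (β * r / t ^ α * D t) t := by
    intro t ht
    have h1 : HasDerivAt (fun s : ℝ => s ^ (1 - α)) ((1 - α) * t ^ (1 - α - 1)) t :=
      Real.hasDerivAt_rpow_const (Or.inl ht.ne')
    have hξ : HasDerivAt (fun s : ℝ => β * (r / (1 - α) * s ^ (1 - α)))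
        (β * (r / (1 - α) * ((1 - α) * t ^ (1 - α - 1)))) t :=
      (h1.const_mul (r / (1 - α))).const_mul β
    have := hξ.exp
    convert this using 1
    rw [hDD t]
    have h1α : (1 : ℝ) - α ≠ 0 := by linarith
    have e2 : t ^ (1 - α - 1) = t ^ (-α) := by rw [show 1 - α - 1 = -α by ring]
    have e7 : t ^ (-α) = (t ^ α)⁻¹ := by rw [Real.rpow_neg ht.le]
    rw [e2, e7]
    have hta : t ^ α ≠ 0 := (Real.rpow_pos_of_pos ht α).ne'
    field_simp
  have hB2 : ∀ t : ℝ, 0 < t → HasDerivAt (fun s => B s ^ 2)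
      (μ * (β * r / t ^ α * D t) - β * r * P t * t ^ (-α - 2) * D t) t := by
    intro t ht
    have hkey := keyDeriv μ r α β t hα1 ht
    have heq : (fun s => B s ^ 2) =ᶠ[nhds t] g := by
      filter_upwards [eventually_gt_nhds ht] with s hs
      rw [hgB s]
      exact Real.sq_sqrt (gpos r α β s hr hα0 hβ0 hβ hs).le
    exact HasDerivAt.congr_of_eventuallyEq hkey heq
  refine ⟨fun t ht => ⟨hDderiv t ht, hB2 t ht⟩, ?_⟩
  intro d f hf hsc xstar hmin t ht hP z
  have hgt := gpos r α β t hr hα0 hβ0 hβ ht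
  have hBderiv : HasDerivAt B
      ((μ * (β * r / t ^ α * D t) - β * r * P t * t ^ (-α - 2) * D t) / (2 * Real.sqrt (g t)))
      t := (keyDeriv μ r α β t hα1 ht).sqrt hgt.ne' 
  have hBB : B t * deriv B t
      = (μ * (β * r / t ^ α * D t) - β * r * P t * t ^ (-α - 2) * D t) / 2 := by
    rw [hBderiv.deriv, hgB t]
    have hs : Real.sqrt (g t) ≠ 0 := (Real.sqrt_pos.mpr hgt).ne'
    field_simp
  have hDpos : 0 < β * r / t ^ α * D t := by
    have := Real.rpow_pos_of_pos ht α
    have := Real.exp_pos (β * ξ t)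
    positivity
  have hApos : 0 < t ^ (-α - 2 : ℝ) := Real.rpow_pos_of_pos ht _
  have hDpos' : 0 < D t := Real.exp_pos _
  have hQ : μ / 2 * ‖z - xstar‖ ^ 2 ≤ f xstar - f z - ⟪gradient f z, xstar - z⟫ := by
    have := hsc z xstar
    rwa [norm_sub_rev] at this
  constructor
  · rw [hBB]
    have h2 : 0 ≤ ‖z - xstar‖ ^ 2 := sq_nonneg _
    nlinarith [mul_le_mul_of_nonneg_left hQ hDpos.le]
  · have : 0 ≤ 1 / 2 * (β * r) * P t * t ^ (-α - 2 : ℝ) * D t := by positivity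
    nlinarith [sq_nonneg ‖z - xstar‖]
end

section
/- Let f : ℝ^d → ℝ be twice continuously differentiable and μ-strongly convex (μ > 0) with minimizer x* and f* = f(x*). Let r > 0, 0 ≤ α < 1, and 0 < β ≤ 1/2; if α = 0, assume additionally r ≤ √(μ/(β(1−β))). Define for t > 0: ξ(t) = (r/(1−α))·t^{1−α}, D(t) = e^{βξ(t)}, B(t) = √(βr·[(1−β)r·t^{1−α} + α]·t^{−α−1}·e^{βξ(t)}), A(t) = √((βr·t^{1−α}/((1−β)r·t^{1−α} + α))·e^{βξ(t)}), C(t) = [1 − βr·t^{1−α}/((1−β)r·t^{1−α} + α)]·e^{βξ(t)}, and P(t) = μt² − (1−β)β·r²·t^{2(1−α)} + (2−3β)·rα·t^{1−α} + α(α+1). Let T > 0 be such that P(s) ≥ 0 for all s ≥ T. Then for every twice differentiable solution x of ẍ(t) + (r/t^α)·ẋ(t) + ∇f(x(t)) = 0 on [T, ∞), the function L(t) = (1/2)‖A(t)ẋ(t) + B(t)(x(t) − x*)‖² + (1/2)C(t)‖ẋ(t)‖² + D(t)(f(x(t)) − f*) satisfies, for all t ≥ T, L'(t) ≤ −[(1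 − (3/2)β)·r·t^{−α}·‖ẋ(t)‖² + (1/2)·βr·P(t)·t^{−α−2}·‖x(t) − x*‖²]·e^{βξ(t)} ≤ 0; in particular L is nonincreasing on [T, ∞). -/
open RealInnerProductSpace

set_option maxHeartbeats 2000000 in
/-- for a μ-strongly convex `f`, `0 ≤ α < 1`, `0 < β ≤ 1/2` (and
`r ≤ √(μ/(β(1−β)))` when `α = 0`), past any time `T` beyond which the polynomial
`P` is nonnegative, the Lyapunov function `L` has derivative bounded above by
`−[(1 − (3/2)β)r t^{−α}‖ẋ‖² + (1/2)βr P(t) t^{−α−2}‖x − x*‖²]e^{βξ(t)} ≤ 0`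
along solutions of `ẍ + (r/t^α)ẋ + ∇f(x) = 0`; in particular `L` is nonincreasing. -/
theorem stmt13 (d : ℕ) (f : EuclideanSpace ℝ (Fin d) → ℝ) (μ : ℝ) (hμ : 0 < μ)
    (hf : ContDiff ℝ 2 f)
    (hsc : ∀ z y : EuclideanSpace ℝ (Fin d),
      μ / 2 * ‖y - z‖ ^ 2 ≤ f y - f z - ⟪gradient f z, y - z⟫)
    (xstar : EuclideanSpace ℝ (Fin d)) (hmin : ∀ y, f xstar ≤ f y)
    (r α β : ℝ) (hr : 0 < r) (hα0 : 0 ≤ α) (hα1 : α < 1) (hβ0 : 0 < β) (hβ : β ≤ 1 / 2)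
    (hα0r : α = 0 → r ≤ Real.sqrt (μ / (β * (1 - β))))
    (T : ℝ) (hT : 0 < T)
    (hP : ∀ s ≥ T, 0 ≤ μ * s ^ 2 - (1 - β) * β * r ^ 2 * s ^ (2 * (1 - α))
      + (2 - 3 * β) * r * α * s ^ (1 - α) + α * (α + 1))
    (x v a : ℝ → EuclideanSpace ℝ (Fin d))
    (hx : ∀ t ∈ Set.Ici T, HasDerivWithinAt x (v t) (Set.Ici T) t)
    (hv : ∀ t ∈ Set.Ici T, HasDerivWithinAt v (a t) (Set.Ici T) t)
    (hode : ∀ t ∈ Set.Ici T, a t + (r / t ^ α) • v t + gradient f (x t) = 0) :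
    let ξ : ℝ → ℝ := fun t => r / (1 - α) * t ^ (1 - α)
    let D : ℝ → ℝ := fun t => Real.exp (β * ξ t)
    let B : ℝ → ℝ := fun t =>
      Real.sqrt (β * r * ((1 - β) * r * t ^ (1 - α) + α) * t ^ (-α - 1) * Real.exp (β * ξ t))
    let A : ℝ → ℝ := fun t =>
      Real.sqrt (β * r * t ^ (1 - α) / ((1 - β) * r * t ^ (1 - α) + α) * Real.exp (β * ξ t))
    let C : ℝ → ℝ := fun t =>
      (1 - β * r * t ^ (1 - α) / ((1 - β) * r * t ^ (1 - α) + α)) * Real.exp (β * ξ t)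
    let P : ℝ → ℝ := fun t => μ * t ^ 2 - (1 - β) * β * r ^ 2 * t ^ (2 * (1 - α))
      + (2 - 3 * β) * r * α * t ^ (1 - α) + α * (α + 1)
    let L : ℝ → ℝ := fun t => 1 / 2 * ‖A t • v t + B t • (x t - xstar)‖ ^ 2
      + 1 / 2 * C t * ‖v t‖ ^ 2 + D t * (f (x t) - f xstar)
    (∀ t ∈ Set.Ici T, ∃ L' : ℝ,
      HasDerivWithinAt L L' (Set.Ici T) t ∧
      L' ≤ -(((1 - 3 / 2 * β) * r * t ^ (-α) * ‖v t‖ ^ 2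
        + 1 / 2 * β * r * P t * t ^ (-α - 2) * ‖x t - xstar‖ ^ 2) * Real.exp (β * ξ t)) ∧
      -(((1 - 3 / 2 * β) * r * t ^ (-α) * ‖v t‖ ^ 2
        + 1 / 2 * β * r * P t * t ^ (-α - 2) * ‖x t - xstar‖ ^ 2) * Real.exp (β * ξ t)) ≤ 0) ∧
    AntitoneOn L (Set.Ici T) := by
  intro ξ D B A C P L
  have hα1' : (0:ℝ) < 1 - α := by linarith
  have hβ1 : (0:ℝ) < 1 - β := by linarith
  have hfdiff : Differentiable ℝ f := hf.differentiable (by norm_num)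
  -- the Lyapunov function in expanded (square-root free) form
  have hLG : ∀ s ∈ Set.Ici T, L s = Real.exp (β * (r / (1 - α) * s ^ (1 - α))) *
      (1 / 2 * ⟪v s, v s⟫ + β * r * s ^ (-α) * ⟪v s, x s - xstar⟫
        + 1 / 2 * (β * r * ((1 - β) * r * s ^ (1 - α) + α) * s ^ (-α - 1)
            * ⟪x s - xstar, x s - xstar⟫)
        + (f (x s) - f xstar)) := by
    intro s hs
    have hs0 : (0:ℝ) < s := lt_of_lt_of_le hT hs
    have hs1 : (0:ℝ) < s ^ (1 - α) := Real.rpow_pos_of_pos hs0 _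
    have hden : (0:ℝ) < (1 - β) * r * s ^ (1 - α) + α := by
      have := mul_pos (mul_pos hβ1 hr) hs1
      linarith
    have hsm1 : (0:ℝ) < s ^ (-α - 1) := Real.rpow_pos_of_pos hs0 _
    have hsma : (0:ℝ) < s ^ (-α : ℝ) := Real.rpow_pos_of_pos hs0 _
    have hexp : (0:ℝ) < Real.exp (β * (r / (1 - α) * s ^ (1 - α))) := Real.exp_pos _
    have hA0 : 0 ≤ A s := Real.sqrt_nonneg _
    have hB0 : 0 ≤ B s := Real.sqrt_nonneg _
    have hA2 : A s ^ 2 = β * r * s ^ (1 - α) / ((1 - β) * r * s ^ (1 - α) + α)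
        * Real.exp (β * (r / (1 - α) * s ^ (1 - α))) := by
      simp only [A, ξ]
      exact Real.sq_sqrt (mul_nonneg (div_nonneg
        (mul_nonneg (mul_nonneg hβ0.le hr.le) hs1.le) hden.le) hexp.le)
    have hB2 : B s ^ 2 = β * r * ((1 - β) * r * s ^ (1 - α) + α) * s ^ (-α - 1)
        * Real.exp (β * (r / (1 - α) * s ^ (1 - α))) := by
      simp only [B, ξ]
      exact Real.sq_sqrt (mul_nonneg (mul_nonneg
        (mul_nonneg (mul_nonneg hβ0.le hr.le) hden.le) hsm1.le) hexp.le)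
    have hAB : A s * B s = β * r * s ^ (-α : ℝ)
        * Real.exp (β * (r / (1 - α) * s ^ (1 - α))) := by
      simp only [A, B, ξ]
      rw [← Real.sqrt_mul (mul_nonneg (div_nonneg
        (mul_nonneg (mul_nonneg hβ0.le hr.le) hs1.le) hden.le) hexp.le)]
      rw [show β * r * s ^ (1 - α) / ((1 - β) * r * s ^ (1 - α) + α)
            * Real.exp (β * (r / (1 - α) * s ^ (1 - α)))
            * (β * r * ((1 - β) * r * s ^ (1 - α) + α) * s ^ (-α - 1)
              * Real.exp (β * (r / (1 - α) * s ^ (1 - α))))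
          = (β * r * s ^ (-α : ℝ) * Real.exp (β * (r / (1 - α) * s ^ (1 - α)))) ^ 2 from ?_]
      · exact Real.sqrt_sq (mul_nonneg (mul_nonneg
          (mul_nonneg hβ0.le hr.le) hsma.le) hexp.le)
      · have e1 : s ^ (1 - α) = s * s ^ (-α : ℝ) := by
          rw [show (1:ℝ) - α = 1 + -α by ring, Real.rpow_add hs0, Real.rpow_one]
        have e2 : s ^ (-α - 1) = s ^ (-α : ℝ) / s := by
          rw [show -α - 1 = -α + -1 by ring, Real.rpow_add hs0, Real.rpow_neg_one]
          ring
        have hden' : (1 - β) * r * (s * s ^ (-α : ℝ)) + α ≠ 0 := by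
          rw [← e1]; exact hden.ne'
        rw [e1, e2]
        field_simp
    have hABvw : A s * (B s * ⟪v s, x s - xstar⟫) = β * r * s ^ (-α : ℝ)
        * Real.exp (β * (r / (1 - α) * s ^ (1 - α))) * ⟪v s, x s - xstar⟫ := by
      rw [← mul_assoc, hAB]
    simp only [L, C, D, ξ]
    rw [norm_add_sq_real, real_inner_smul_left, real_inner_smul_right,
      norm_smul, norm_smul, Real.norm_eq_abs, Real.norm_eq_abs,
      abs_of_nonneg hA0, abs_of_nonneg hB0, mul_pow, mul_pow, hA2, hB2, hABvw]
    simp only [real_inner_self_eq_norm_sq]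
    ring
  -- the clean closed form of the derivative of L
  set Φ : ℝ → ℝ := fun t =>
    -(((1 - 3 / 2 * β) * r * t ^ (-α) * ‖v t‖ ^ 2
        + 1 / 2 * β * r * P t * t ^ (-α - 2) * ‖x t - xstar‖ ^ 2) * Real.exp (β * ξ t))
      + β * r * t ^ (-α : ℝ) * Real.exp (β * ξ t)
        * (μ / 2 * ‖x t - xstar‖ ^ 2 + (f (x t) - f xstar)
            - ⟪gradient f (x t), x t - xstar⟫) with hΦ
  have hkey : ∀ t ∈ Set.Ici T, HasDerivWithinAt L (Φ t) (Set.Ici T) t := by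
    intro t ht
    have ht0 : (0:ℝ) < t := lt_of_lt_of_le hT ht
    have hs_pow : HasDerivWithinAt (fun u : ℝ => u ^ (1 - α)) ((1 - α) * t ^ (-α : ℝ))
        (Set.Ici T) t := by
      have h := (Real.hasDerivAt_rpow_const (p := 1 - α)
        (Or.inl ht0.ne')).hasDerivWithinAt (s := Set.Ici T)
      rwa [show (1:ℝ) - α - 1 = -α by ring] at h
    have hp_pow : HasDerivWithinAt (fun u : ℝ => u ^ (-α : ℝ)) (-α * t ^ (-α - 1))
        (Set.Ici T) t :=
      (Real.hasDerivAt_rpow_const (p := -α) (Or.inl ht0.ne')).hasDerivWithinAt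
    have hq_pow : HasDerivWithinAt (fun u : ℝ => u ^ (-α - 1)) ((-α - 1) * t ^ (-α - 2))
        (Set.Ici T) t := by
      have h := (Real.hasDerivAt_rpow_const (p := -α - 1)
        (Or.inl ht0.ne')).hasDerivWithinAt (s := Set.Ici T)
      rwa [show -α - 1 - 1 = -α - 2 by ring] at h
    have hw' : HasDerivWithinAt (fun u => x u - xstar) (v t) (Set.Ici T) t :=
      (hx t ht).sub_const xstar
    have d1 : HasDerivWithinAt (fun u => ⟪v u, v u⟫) (⟪v t, a t⟫ + ⟪a t, v t⟫)
        (Set.Ici T) t := HasDerivWithinAt.inner ℝ (hv t ht) (hv t ht)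
    have dvw : HasDerivWithinAt (fun u => ⟪v u, x u - xstar⟫)
        (⟪v t, v t⟫ + ⟪a t, x t - xstar⟫) (Set.Ici T) t :=
      HasDerivWithinAt.inner ℝ (hv t ht) hw'
    have dww : HasDerivWithinAt (fun u => ⟪x u - xstar, x u - xstar⟫)
        (⟪x t - xstar, v t⟫ + ⟪v t, x t - xstar⟫) (Set.Ici T) t :=
      HasDerivWithinAt.inner ℝ hw' hw'
    have dfx : HasDerivWithinAt (fun u => f (x u)) ⟪gradient f (x t), v t⟫
        (Set.Ici T) t := by
      have h := ((hfdiff (x t)).hasGradientAt.hasFDerivAt).comp_hasDerivWithinAt t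
        (hx t ht)
      simpa [Function.comp_def] using h
    have hE : HasDerivWithinAt (fun u : ℝ => Real.exp (β * (r / (1 - α) * u ^ (1 - α))))
        (Real.exp (β * (r / (1 - α) * t ^ (1 - α)))
          * (β * (r / (1 - α) * ((1 - α) * t ^ (-α : ℝ))))) (Set.Ici T) t :=
      ((hs_pow.const_mul (r / (1 - α))).const_mul β).exp
    have hg1 := (hs_pow.const_mul ((1 - β) * r)).add_const α
    have hg2 := (hg1.const_mul (β * r)).mul hq_pow
    have hg3 := (hg2.mul dww).const_mul ((1:ℝ)/2)
    have ht1 := d1.const_mul ((1:ℝ)/2)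
    have ht2 := (hp_pow.const_mul (β * r)).mul dvw
    have hQ := ((ht1.add ht2).add hg3).add (dfx.sub_const (f xstar))
    have hraw := hE.mul hQ
    refine HasDerivWithinAt.congr ?_ hLG (hLG t ht)
    convert hraw using 1
    case e'_4 => rfl
    case e'_8 => rfl
    simp only [hΦ, P, ξ, Pi.mul_apply, Pi.add_apply]
    have h5 : r / t ^ α = r * t ^ (-α : ℝ) := by
      rw [Real.rpow_neg ht0.le, div_eq_mul_inv]
    have ha : a t = -gradient f (x t) - (r / t ^ α) • v t := by
      have h := hode t ht
      have h1 : a t + (r / t ^ α) • v t = -gradient f (x t) :=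
        eq_neg_of_add_eq_zero_left h
      have := eq_sub_of_add_eq h1
      linear_combination (norm := module) this
    have e_va : ⟪v t, a t⟫ = -(r * t ^ (-α : ℝ)) * ⟪v t, v t⟫
        - ⟪gradient f (x t), v t⟫ := by
      rw [ha, inner_sub_right, inner_neg_right, real_inner_smul_right, h5,
        real_inner_comm (gradient f (x t)) (v t)]
      ring
    have e_av : ⟪a t, v t⟫ = -(r * t ^ (-α : ℝ)) * ⟪v t, v t⟫
        - ⟪gradient f (x t), v t⟫ := by
      rw [ha, inner_sub_left, inner_neg_left, real_inner_smul_left, h5]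
      ring
    have e_aw : ⟪a t, x t - xstar⟫ = -(r * t ^ (-α : ℝ)) * ⟪v t, x t - xstar⟫
        - ⟪gradient f (x t), x t - xstar⟫ := by
      rw [ha, inner_sub_left, inner_neg_left, real_inner_smul_left, h5]
      ring
    have e_wv : ⟪x t - xstar, v t⟫ = ⟪v t, x t - xstar⟫ :=
      real_inner_comm (v t) (x t - xstar)
    rw [e_va, e_av, e_aw, e_wv]
    simp only [← real_inner_self_eq_norm_sq]
    have e1 : t ^ (1 - α) = t * t ^ (-α : ℝ) := by
      rw [show (1:ℝ) - α = 1 + -α by ring, Real.rpow_add ht0, Real.rpow_one]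
    have e2 : t ^ (-α - 1) = t ^ (-α : ℝ) / t := by
      rw [show -α - 1 = -α + -1 by ring, Real.rpow_add ht0, Real.rpow_neg_one]
      ring
    have e3 : t ^ (-α - 2) = t ^ (-α : ℝ) / (t * t) := by
      rw [show -α - 2 = -α + -1 + -1 by ring, Real.rpow_add ht0, Real.rpow_add ht0,
        Real.rpow_neg_one]
      ring
    have e4 : t ^ (2 * (1 - α)) = (t * t ^ (-α : ℝ)) * (t * t ^ (-α : ℝ)) := by
      rw [show 2 * (1 - α) = (1 - α) + (1 - α) by ring, Real.rpow_add ht0, e1]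
    rw [e4, e3, e2, e1]
    field_simp
    ring
  have hle1 : ∀ t ∈ Set.Ici T, Φ t ≤ -(((1 - 3 / 2 * β) * r * t ^ (-α) * ‖v t‖ ^ 2
      + 1 / 2 * β * r * P t * t ^ (-α - 2) * ‖x t - xstar‖ ^ 2) * Real.exp (β * ξ t)) := by
    intro t ht
    have ht0 : (0:ℝ) < t := lt_of_lt_of_le hT ht
    have hS : μ / 2 * ‖x t - xstar‖ ^ 2 + (f (x t) - f xstar)
        - ⟪gradient f (x t), x t - xstar⟫ ≤ 0 := by
      have h := hsc (x t) xstar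
      rw [show xstar - x t = -(x t - xstar) from (neg_sub _ _).symm, norm_neg,
        inner_neg_right] at h
      linarith
    have hfac : 0 ≤ β * r * t ^ (-α : ℝ) * Real.exp (β * ξ t) :=
      mul_nonneg (mul_nonneg (mul_nonneg hβ0.le hr.le)
        (Real.rpow_nonneg ht0.le _)) (Real.exp_pos _).le
    have := mul_nonpos_of_nonneg_of_nonpos hfac hS
    simp only [hΦ]
    linarith
  have hle2 : ∀ t ∈ Set.Ici T,
      -(((1 - 3 / 2 * β) * r * t ^ (-α) * ‖v t‖ ^ 2
        + 1 / 2 * β * r * P t * t ^ (-α - 2) * ‖x t - xstar‖ ^ 2)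
          * Real.exp (β * ξ t)) ≤ 0 := by
    intro t ht
    have ht0 : (0:ℝ) < t := lt_of_lt_of_le hT ht
    have hPt : 0 ≤ P t := by simp only [P]; exact hP t ht
    have h1 : (0:ℝ) ≤ 1 - 3 / 2 * β := by linarith
    rw [neg_nonpos]
    refine mul_nonneg (add_nonneg ?_ ?_) (Real.exp_pos _).le
    · exact mul_nonneg (mul_nonneg (mul_nonneg h1 hr.le) (Real.rpow_nonneg ht0.le _))
        (pow_nonneg (norm_nonneg _) 2)
    · exact mul_nonneg (mul_nonneg (mul_nonneg (mul_nonneg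
        (by linarith : (0:ℝ) ≤ 1 / 2 * β) hr.le) hPt)
        (Real.rpow_nonneg ht0.le _)) (pow_nonneg (norm_nonneg _) 2)
  refine ⟨fun t ht => ⟨Φ t, hkey t ht, hle1 t ht, hle2 t ht⟩, ?_⟩
  refine antitoneOn_of_deriv_nonpos (convex_Ici T)
    (fun t ht => (hkey t ht).continuousWithinAt) (fun t ht => ?_) (fun t ht => ?_)
  · rw [interior_Ici] at ht
    exact ((hkey t (le_of_lt ht : T ≤ t)).hasDerivAt
      (Ici_mem_nhds ht)).differentiableAt.differentiableWithinAt
  · rw [interior_Ici] at ht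
    rw [((hkey t (le_of_lt ht : T ≤ t)).hasDerivAt (Ici_mem_nhds ht)).deriv]
    exact (hle1 t (le_of_lt ht : T ≤ t)).trans (hle2 t (le_of_lt ht : T ≤ t))
end

section
/- Let f : ℝ^d → ℝ be twice continuously differentiable and μ-strongly convex (μ > 0) with minimizer x* and f* = f(x*). Let r > 0 and 0 < β ≤ min{2/3, (1+r)/(2r)}. Define for t > 0: D(t) = t^{βr}, B(t) = √(βr·[(1−β)r + 1]·t^{βr−2}), A(t) = √((βr/((1−β)r + 1))·t^{βr}), C(t) = [1 − βr/((1−β)r + 1)]·t^{βr}, and P(t) = μt² + (βr − 2)(βr − r − 1). Let T > 0 be such that P(s) ≥ 0 for all s ≥ T. Then for every twice differentiable solution x of ẍ(t) + (r/t)·ẋ(t) + ∇f(x(t)) = 0 on [T, ∞), the function L(t) = (1/2)‖A(t)ẋ(t) + B(t)(x(t) − x*)‖² + (1/2)C(t)‖ẋ(t)‖² + D(t)(f(x(t)) − f*) satisfies L'(t) ≤ 0 for all t ≥ T; in particular L is nonincreasing on [T, ∞). -/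
open RealInnerProductSpace

set_option maxHeartbeats 1000000 in
/-- for a μ-strongly convex `f` and `α = 1`, past any time `T`
beyond which the polynomial `P(t) = μt² + (βr−2)(βr−r−1)` is nonnegative, the
Lyapunov function `L` built from the coefficients `A, B, C, D` (with `ξ(t) = r ln t`)
is differentiable with nonpositive derivative along solutions of
`ẍ + (r/t)ẋ + ∇f(x) = 0`; in particular `L` is nonincreasing on `[T, ∞)`. -/
theorem stmt14 (d : ℕ) (f : EuclideanSpace ℝ (Fin d) → ℝ) (μ : ℝ) (hμ : 0 < μ)
    (hf : ContDiff ℝ 2 f)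
    (hsc : ∀ z y : EuclideanSpace ℝ (Fin d),
      μ / 2 * ‖y - z‖ ^ 2 ≤ f y - f z - ⟪gradient f z, y - z⟫)
    (xstar : EuclideanSpace ℝ (Fin d)) (hmin : ∀ y, f xstar ≤ f y)
    (r β : ℝ) (hr : 0 < r) (hβ0 : 0 < β)
    (hβ : β ≤ min (2 / 3) ((1 + r) / (2 * r)))
    (T : ℝ) (hT : 0 < T)
    (hP : ∀ s ≥ T, 0 ≤ μ * s ^ 2 + (β * r - 2) * (β * r - r - 1))
    (x v a : ℝ → EuclideanSpace ℝ (Fin d))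
    (hx : ∀ t ∈ Set.Ici T, HasDerivWithinAt x (v t) (Set.Ici T) t)
    (hv : ∀ t ∈ Set.Ici T, HasDerivWithinAt v (a t) (Set.Ici T) t)
    (hode : ∀ t ∈ Set.Ici T, a t + (r / t) • v t + gradient f (x t) = 0) :
    let D : ℝ → ℝ := fun t => t ^ (β * r)
    let B : ℝ → ℝ := fun t => Real.sqrt (β * r * ((1 - β) * r + 1) * t ^ (β * r - 2))
    let A : ℝ → ℝ := fun t => Real.sqrt (β * r / ((1 - β) * r + 1) * t ^ (β * r))
    let C : ℝ → ℝ := fun t => (1 - β * r / ((1 - β) * r + 1)) * t ^ (β * r)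
    let L : ℝ → ℝ := fun t => 1 / 2 * ‖A t • v t + B t • (x t - xstar)‖ ^ 2
      + 1 / 2 * C t * ‖v t‖ ^ 2 + D t * (f (x t) - f xstar)
    (∀ t ∈ Set.Ici T, ∃ L' : ℝ,
      HasDerivWithinAt L L' (Set.Ici T) t ∧ L' ≤ 0) ∧
    AntitoneOn L (Set.Ici T) := by
  intro D B A C L
  have hβ23 : β ≤ 2 / 3 := le_trans hβ (min_le_left _ _)
  have hβr : 2 * (β * r) ≤ 1 + r := by
    have h2 : β ≤ (1 + r) / (2 * r) := le_trans hβ (min_le_right _ _)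
    have := (le_div_iff₀ (by positivity : (0:ℝ) < 2 * r)).mp h2
    nlinarith
  have hb : 0 < β * r := by positivity
  have hc1 : 0 < (1 - β) * r + 1 := by nlinarith
  have hdiff : Differentiable ℝ f := hf.differentiable (by norm_num)
  -- the polynomial form of L
  set M : ℝ → ℝ := fun t => 1 / 2 * t ^ (β * r) * ⟪v t, v t⟫
      + (β * r) * t ^ (β * r - 1) * ⟪v t, x t - xstar⟫
      + (1 / 2 * ((β * r) * ((1 - β) * r + 1))) * t ^ (β * r - 2)
          * ⟪x t - xstar, x t - xstar⟫
      + t ^ (β * r) * (f (x t) - f xstar) with hM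
  have hLM : ∀ t ∈ Set.Ici T, L t = M t := by
    intro t ht
    have htpos : 0 < t := lt_of_lt_of_le hT ht
    have hA2 : A t ^ 2 = β * r / ((1 - β) * r + 1) * t ^ (β * r) :=
      Real.sq_sqrt (by positivity)
    have hB2 : B t ^ 2 = β * r * ((1 - β) * r + 1) * t ^ (β * r - 2) :=
      Real.sq_sqrt (by positivity)
    have hpow : t ^ (β * r) * t ^ (β * r - 2) = t ^ (β * r - 1) * t ^ (β * r - 1) := by
      rw [← Real.rpow_add htpos, ← Real.rpow_add htpos]; ring_nf
    have hAB : A t * B t = β * r * t ^ (β * r - 1) := by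
      rw [show A t * B t = Real.sqrt ((β * r / ((1 - β) * r + 1) * t ^ (β * r)) *
            (β * r * ((1 - β) * r + 1) * t ^ (β * r - 2))) from
          (Real.sqrt_mul (by positivity) _).symm]
      rw [show (β * r / ((1 - β) * r + 1) * t ^ (β * r)) *
            (β * r * ((1 - β) * r + 1) * t ^ (β * r - 2))
          = (β * r * t ^ (β * r - 1)) ^ 2 by
        rw [div_mul_eq_mul_div, div_mul_eq_mul_div, div_eq_iff hc1.ne']
        linear_combination (β * r) ^ 2 * ((1 - β) * r + 1) * hpow]
      exact Real.sqrt_sq (by positivity)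
    have hnorm : ‖A t • v t + B t • (x t - xstar)‖ ^ 2
        = A t ^ 2 * ⟪v t, v t⟫ + 2 * (A t * B t) * ⟪v t, x t - xstar⟫
          + B t ^ 2 * ⟪x t - xstar, x t - xstar⟫ := by
      rw [norm_add_sq_real, norm_smul, norm_smul, real_inner_smul_left,
        real_inner_smul_right, mul_pow, mul_pow, real_inner_self_eq_norm_sq,
        real_inner_self_eq_norm_sq, Real.norm_eq_abs, Real.norm_eq_abs, sq_abs, sq_abs]
      ring
    show 1 / 2 * ‖A t • v t + B t • (x t - xstar)‖ ^ 2
        + 1 / 2 * C t * ‖v t‖ ^ 2 + D t * (f (x t) - f xstar) = M t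
    rw [hnorm, hA2, hB2, hAB]
    simp only [hM, C, D, ← real_inner_self_eq_norm_sq]
    field_simp
    ring
  -- the derivative computation
  have key : ∀ t ∈ Set.Ici T, ∃ L' : ℝ,
      HasDerivWithinAt L L' (Set.Ici T) t ∧ L' ≤ 0 := by
    intro t ht
    have htpos : 0 < t := lt_of_lt_of_le hT ht
    have hxd := hx t ht
    have hvd := hv t ht
    have hud : HasDerivWithinAt (fun s => x s - xstar) (v t) (Set.Ici T) t :=
      hxd.sub_const xstar
    have hfd : HasDerivWithinAt (fun s => f (x s)) ⟪gradient f (x t), v t⟫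
        (Set.Ici T) t := by
      have hg := (hdiff (x t)).hasGradientAt
      exact (hg.hasFDerivAt.comp_hasDerivWithinAt t hxd).congr_deriv (by simp)
    have hp : ∀ p : ℝ, HasDerivWithinAt (fun s : ℝ => s ^ p) (p * t ^ (p - 1))
        (Set.Ici T) t := fun p =>
      (Real.hasDerivAt_rpow_const (Or.inl htpos.ne')).hasDerivWithinAt
    have hpb1 : HasDerivWithinAt (fun s : ℝ => s ^ (β * r - 1))
        ((β * r - 1) * t ^ (β * r - 2)) (Set.Ici T) t := by
      have := hp (β * r - 1); rwa [show β * r - 1 - 1 = β * r - 2 by ring] at this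
    have hpb2 : HasDerivWithinAt (fun s : ℝ => s ^ (β * r - 2))
        ((β * r - 2) * t ^ (β * r - 3)) (Set.Ici T) t := by
      have := hp (β * r - 2); rwa [show β * r - 2 - 1 = β * r - 3 by ring] at this
    have h1 := hvd.inner ℝ hvd
    have h2 := hvd.inner ℝ hud
    have h3 := hud.inner ℝ hud
    have T1 := (((hp (β * r)).const_mul (1/2 : ℝ)).mul h1)
    have T2 := ((hpb1.const_mul (β * r)).mul h2)
    have T3 := ((hpb2.const_mul (1 / 2 * ((β * r) * ((1 - β) * r + 1)))).mul h3)
    have T4 := ((hp (β * r)).mul (hfd.sub_const (f xstar)))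
    have hMd := ((T1.add T2).add T3).add T4
    have hLd := hMd.congr hLM (hLM t ht)
    set G := gradient f (x t) with hG
    set u := x t - xstar with hu
    have ha : a t = -((r / t) • v t + G) := by
      have h := hode t ht
      rw [add_assoc] at h
      exact eq_neg_of_add_eq_zero_left h
    have hIa_v : ⟪v t, a t⟫ = -(r / t * ⟪v t, v t⟫) - ⟪G, v t⟫ := by
      rw [ha, inner_neg_right, inner_add_right, real_inner_smul_right,
        real_inner_comm (v t) G]
      ring
    have hIa_v' : ⟪a t, v t⟫ = -(r / t * ⟪v t, v t⟫) - ⟪G, v t⟫ := by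
      rw [ha, inner_neg_left, inner_add_left, real_inner_smul_left]
      ring
    have hIa_u : ⟪a t, u⟫ = -(r / t * ⟪v t, u⟫) - ⟪G, u⟫ := by
      rw [ha, inner_neg_left, inner_add_left, real_inner_smul_left]
      ring
    have hsc' : f (x t) - f xstar - ⟪G, u⟫ ≤ -(μ / 2) * ⟪u, u⟫ := by
      have h := hsc (x t) xstar
      have e1 : ‖xstar - x t‖ ^ 2 = ⟪u, u⟫ := by
        rw [real_inner_self_eq_norm_sq, hu, norm_sub_rev]
      have e2 : ⟪G, xstar - x t⟫ = -⟪G, u⟫ := by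
        rw [hu, show xstar - x t = -(x t - xstar) by abel, inner_neg_right]
      rw [e1, e2] at h
      linarith
    set p := t ^ (β * r - 3) with hpdef
    have hppos : 0 < p := Real.rpow_pos_of_pos htpos _
    have e0 : t ^ (β * r - 2) = p * t := by
      rw [hpdef, show β * r - 2 = (β * r - 3) + 1 by ring, Real.rpow_add htpos,
        Real.rpow_one]
    have e1 : t ^ (β * r - 1) = p * t ^ 2 := by
      rw [hpdef, show β * r - 1 = (β * r - 3) + 2 by ring, Real.rpow_add htpos,
        show (2:ℝ) = ((2:ℕ):ℝ) by norm_num, Real.rpow_natCast]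
    have e2 : t ^ (β * r) = p * t ^ 3 := by
      rw [hpdef, ← Real.rpow_natCast t 3, ← Real.rpow_add htpos]
      congr 1
      push_cast
      ring
    refine ⟨(3 * (β * r) / 2 - r) * (p * t ^ 2) * ⟪v t, v t⟫
      + 1 / 2 * (β * r) * ((1 - β) * r + 1) * (β * r - 2) * p * ⟪u, u⟫
      + (β * r) * (p * t ^ 2) * (f (x t) - f xstar - ⟪G, u⟫), ?_, ?_⟩
    · refine hLd.congr_deriv ?_
      rw [hIa_v, hIa_v', hIa_u, real_inner_comm u (v t), e0, e1, e2]
      field_simp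
      ring
    · have hvv : (0:ℝ) ≤ ⟪v t, v t⟫ := real_inner_self_nonneg
      have huu : (0:ℝ) ≤ ⟪u, u⟫ := real_inner_self_nonneg
      have hq : 0 ≤ μ * t ^ 2 + (β * r - 2) * (β * r - r - 1) := hP t ht
      have h31 : 3 * (β * r) / 2 - r ≤ 0 := by nlinarith
      have hterm1 : (3 * (β * r) / 2 - r) * (p * t ^ 2) * ⟪v t, v t⟫ ≤ 0 :=
        mul_nonpos_of_nonpos_of_nonneg
          (mul_nonpos_of_nonpos_of_nonneg h31 (by positivity)) hvv
      have hterm2 : 1 / 2 * (β * r) * ((1 - β) * r + 1) * (β * r - 2) * p * ⟪u, u⟫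
          + (β * r) * (p * t ^ 2) * (f (x t) - f xstar - ⟪G, u⟫) ≤ 0 := by
        nlinarith [mul_le_mul_of_nonneg_left hsc'
            (by positivity : (0:ℝ) ≤ (β * r) * (p * t ^ 2)),
          mul_nonneg (mul_nonneg hb.le hppos.le) (mul_nonneg hq huu)]
      linarith
  refine ⟨key, ?_⟩
  have hcont : ContinuousOn L (Set.Ici T) := fun t ht =>
    ((key t ht).choose_spec.1).continuousWithinAt
  apply antitoneOn_of_deriv_nonpos (convex_Ici T) hcont
  · intro t ht
    rw [interior_Ici] at ht
    obtain ⟨L', hL', _⟩ := key t (Set.mem_Ici.mpr (le_of_lt (Set.mem_Ioi.mp ht)))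
    exact (hL'.hasDerivAt (Ici_mem_nhds ht)).differentiableAt.differentiableWithinAt
  · intro t ht
    rw [interior_Ici] at ht
    obtain ⟨L', hL', hle⟩ := key t (Set.mem_Ici.mpr (le_of_lt (Set.mem_Ioi.mp ht)))
    rw [(hL'.hasDerivAt (Ici_mem_nhds ht)).deriv]
    exact hle
end

section
/- Let f : ℝ^d → ℝ be twice continuously differentiable and μ-strongly convex (μ > 0) with minimizer x* and f* = f(x*), and suppose ∇f is globally Lipschitz. Let x : [0, ∞) → ℝ^d be twice differentiable with x(0) = x₀, ẋ(0) = 0, satisfying ẍ(t) + 2√μ·ẋ(t) + ∇f(x(t)) = 0 for all t ≥ 0. Then for all t ≥ 0: f(x(t)) − f* ≤ [(μ/2)·‖x₀ − x*‖² + f(x₀) − f*]·e^{−√μ·t}. -/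
open RealInnerProductSpace

/-- linear convergence of the (0, 2√μ)-damped system
`ẍ + 2√μ·ẋ + ∇f(x) = 0` for μ-strongly convex `f`:
`f(x(t)) − f* ≤ [(μ/2)‖x₀ − x*‖² + f(x₀) − f*]·e^{−√μ·t}`. -/
theorem stmt15 (d : ℕ) (f : EuclideanSpace ℝ (Fin d) → ℝ) (μ : ℝ) (hμ : 0 < μ)
    (hf : ContDiff ℝ 2 f)
    (hsc : ∀ z y : EuclideanSpace ℝ (Fin d),
      μ / 2 * ‖y - z‖ ^ 2 ≤ f y - f z - ⟪gradient f z, y - z⟫)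
    (xstar : EuclideanSpace ℝ (Fin d)) (hmin : ∀ y, f xstar ≤ f y)
    (Lip : ℝ) (hLip : 0 < Lip)
    (hgrad : ∀ u v : EuclideanSpace ℝ (Fin d),
      ‖gradient f u - gradient f v‖ ≤ Lip * ‖u - v‖)
    (x₀ : EuclideanSpace ℝ (Fin d))
    (x v a : ℝ → EuclideanSpace ℝ (Fin d))
    (hx : ∀ t ∈ Set.Ici (0 : ℝ), HasDerivWithinAt x (v t) (Set.Ici (0 : ℝ)) t)
    (hv : ∀ t ∈ Set.Ici (0 : ℝ), HasDerivWithinAt v (a t) (Set.Ici (0 : ℝ)) t)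
    (hode : ∀ t ∈ Set.Ici (0 : ℝ),
      a t + (2 * Real.sqrt μ) • v t + gradient f (x t) = 0)
    (hx0 : x 0 = x₀) (hv0 : v 0 = 0) :
    ∀ t ≥ (0 : ℝ), f (x t) - f xstar ≤
      (μ / 2 * ‖x₀ - xstar‖ ^ 2 + (f x₀ - f xstar)) * Real.exp (-(Real.sqrt μ) * t) := by
  set s := Real.sqrt μ with hsdef
  have hs0 : 0 < s := Real.sqrt_pos.mpr hμ
  have hss : s * s = μ := Real.mul_self_sqrt hμ.le
  have hdiff : Differentiable ℝ f := hf.differentiable two_ne_zero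
  set w : ℝ → EuclideanSpace ℝ (Fin d) := fun t => v t + s • (x t - xstar) with hwdef
  set E : ℝ → ℝ := fun t => f (x t) - f xstar + (1/2) * ⟪w t, w t⟫ with hEdef
  set E' : ℝ → ℝ := fun τ => ⟪gradient f (x τ), v τ⟫ + ⟪a τ + s • v τ, w τ⟫ with hE'def
  set g : ℝ → ℝ := fun t => E t * Real.exp (s * t) with hgdef
  -- derivative of w
  have hw : ∀ τ ∈ Set.Ici (0:ℝ), HasDerivWithinAt w (a τ + s • v τ) (Set.Ici 0) τ := by
    intro τ hτ
    exact (hv τ hτ).add (((hx τ hτ).sub_const xstar).const_smul s)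
  -- derivative of f ∘ x
  have hfx : ∀ τ ∈ Set.Ici (0:ℝ),
      HasDerivWithinAt (fun t => f (x t)) ⟪gradient f (x τ), v τ⟫ (Set.Ici 0) τ := by
    intro τ hτ
    have hg := (hdiff (x τ)).hasGradientAt
    have := hg.hasFDerivAt.comp_hasDerivWithinAt τ (hx τ hτ)
    have h' : HasDerivWithinAt (fun t => f (x t))
        (InnerProductSpace.toDual ℝ _ (gradient f (x τ)) (v τ)) (Set.Ici 0) τ := this
    simpa using h'
  -- derivative of E
  have hE : ∀ τ ∈ Set.Ici (0:ℝ), HasDerivWithinAt E (E' τ) (Set.Ici 0) τ := by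
    intro τ hτ
    have h2 := HasDerivWithinAt.inner ℝ (hw τ hτ) (hw τ hτ)
    have h3 : HasDerivWithinAt E
        (⟪gradient f (x τ), v τ⟫ + (1/2) * (⟪w τ, a τ + s • v τ⟫ + ⟪a τ + s • v τ, w τ⟫))
        (Set.Ici 0) τ :=
      ((hfx τ hτ).sub_const (f xstar)).add (h2.const_mul (1/2))
    have heq : ⟪gradient f (x τ), v τ⟫ + (1/2) * (⟪w τ, a τ + s • v τ⟫ + ⟪a τ + s • v τ, w τ⟫)
        = E' τ := by
      have hc := real_inner_comm (w τ) (a τ + s • v τ)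
      rw [hE'def]; dsimp only; linarith
    rwa [heq] at h3
  -- key inequality: E' + s E ≤ 0
  have alg : ∀ (G V U : EuclideanSpace ℝ (Fin d)) (F : ℝ),
      F + μ/2 * ⟪U, U⟫ ≤ ⟪G, U⟫ →
      ⟪G, V⟫ + ⟪-(s • V) - G, V + s • U⟫ + s * (F + 1/2 * ⟪V + s • U, V + s • U⟫) ≤ 0 := by
    intro G V U F hm
    have hq : (0:ℝ) ≤ ⟪V, V⟫ := real_inner_self_nonneg
    have e1 : ⟪G, V⟫ + ⟪-(s • V) - G, V + s • U⟫ + s * (F + 1/2 * ⟪V + s • U, V + s • U⟫)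
        = -(s/2) * ⟪V, V⟫ + s * (F + μ/2 * ⟪U, U⟫ - ⟪G, U⟫) := by
      simp only [inner_add_left, inner_add_right, inner_sub_left, inner_neg_left,
        real_inner_smul_left, real_inner_smul_right, real_inner_comm U V]
      linear_combination (s * ⟪U, U⟫ / 2) * hss
    rw [e1]
    have h2 : s * (F + μ/2 * ⟪U, U⟫ - ⟪G, U⟫) ≤ 0 :=
      mul_nonpos_of_nonneg_of_nonpos hs0.le (by linarith)
    nlinarith [mul_nonneg hs0.le hq]
  have hkey : ∀ τ ∈ Set.Ici (0:ℝ), E' τ + s * E τ ≤ 0 := by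
    intro τ hτ
    have ha : a τ + s • v τ = -(s • v τ) - gradient f (x τ) := by
      have h0 := hode τ hτ
      have : a τ = -((2*s) • v τ) - gradient f (x τ) := by
        rw [eq_sub_iff_add_eq, ← neg_add_eq_zero] at *
        simpa [add_comm, add_left_comm, add_assoc] using h0
      rw [this, two_mul, add_smul]; abel
    have hsc' : f (x τ) - f xstar + μ/2 * ⟪x τ - xstar, x τ - xstar⟫
        ≤ ⟪gradient f (x τ), x τ - xstar⟫ := by
      have h := hsc (x τ) xstar
      have h1 : xstar - x τ = -(x τ - xstar) := by abel
      rw [h1, inner_neg_right, norm_neg, ← real_inner_self_eq_norm_sq] at h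
      linarith
    have halg := alg (gradient f (x τ)) (v τ) (x τ - xstar) (f (x τ) - f xstar) hsc'
    simp only [hE'def, hEdef, hwdef]
    rw [ha]
    linarith
  -- g is antitone on Ici 0
  have hanti : AntitoneOn g (Set.Ici (0:ℝ)) := by
    apply antitoneOn_of_hasDerivWithinAt_nonpos (convex_Ici 0)
        (f' := fun τ => (E' τ + s * E τ) * Real.exp (s * τ))
    · intro τ hτ
      exact ((hE τ hτ).continuousWithinAt.mul
        ((Real.continuous_exp.comp (continuous_const.mul continuous_id)).continuousWithinAt))
    · intro τ hτ
      rw [interior_Ici] at hτ ⊢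
      have hexp : HasDerivWithinAt (fun t => Real.exp (s * t)) (s * Real.exp (s * τ))
          (Set.Ioi 0) τ := by
        have := ((hasDerivAt_id τ).const_mul s).exp
        simpa [mul_comm] using this.hasDerivWithinAt
      have := ((hE τ (Set.Ioi_subset_Ici_self hτ)).mono Set.Ioi_subset_Ici_self).mul hexp
      have e : (E' τ + s * E τ) * Real.exp (s * τ)
          = E' τ * Real.exp (s * τ) + E τ * (s * Real.exp (s * τ)) := by ring
      rw [e]; exact this
    · intro τ hτ
      rw [interior_Ici] at hτ
      have := hkey τ (Set.Ioi_subset_Ici_self hτ)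
      have he : (0:ℝ) < Real.exp (s * τ) := Real.exp_pos _
      nlinarith
  -- conclude
  intro t ht
  have hg0 : g t ≤ g 0 := hanti Set.self_mem_Ici ht ht
  have hE0 : E 0 = μ / 2 * ‖x₀ - xstar‖ ^ 2 + (f x₀ - f xstar) := by
    rw [hEdef]
    simp only [hwdef, hx0, hv0, zero_add, real_inner_smul_left, real_inner_smul_right]
    rw [real_inner_self_eq_norm_sq]
    nlinarith [hss]
  have hEt : f (x t) - f xstar ≤ E t := by
    have := real_inner_self_nonneg (x := w t)
    rw [hEdef]; linarith
  have hgt : E t * Real.exp (s * t) ≤ E 0 := by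
    simpa [hgdef] using hg0
  have hexp : (0:ℝ) < Real.exp (s * t) := Real.exp_pos _
  have : E t ≤ E 0 * Real.exp (-s * t) := by
    rw [neg_mul, Real.exp_neg, ← div_eq_mul_inv, le_div_iff₀ hexp]
    exact hgt
  calc f (x t) - f xstar ≤ E t := hEt
    _ ≤ E 0 * Real.exp (-s * t) := this
    _ = (μ / 2 * ‖x₀ - xstar‖ ^ 2 + (f x₀ - f xstar)) * Real.exp (-s * t) := by rw [hE0]
end

section
/- Let f : ℝ^d → ℝ be twice continuously differentiable and μ-strongly convex (μ > 0) with minimizer x* and f* = f(x*). Let r > 0 and 0 < α < 1. Define for t > 0: ξ(t) = (r/(1−α))·t^{1−α}, D(t) = e^{ξ(t)/2}, B(t) = √((r/2)·[(r/2)·t^{1−α} + α]·t^{−α−1}·e^{ξ(t)/2}), A(t) = √(((r/2)·t^{1−α}/((r/2)·t^{1−α} + α))·e^{ξ(t)/2}), C(t) = [1 − (r/2)·t^{1−α}/((r/2)·t^{1−α} + α)]·e^{ξ(t)/2}, L(t) = (1/2)‖A(t)ẋ(t) + B(t)(x(t) − x*)‖² + (1/2)C(t)‖ẋ(t)‖²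 + D(t)(f(x(t)) − f*), and P(t) = μt² − (r²/4)·t^{2(1−α)} + (r·α/2)·t^{1−α} + α(α+1). Let T > 0 be such that P(s) ≥ 0 for all s ≥ T, and let x be a twice differentiable solution of ẍ(t) + (r/t^α)·ẋ(t) + ∇f(x(t)) = 0 on [T, ∞). Then for all t ≥ T: f(x(t)) − f* ≤ L(T)·e^{−(r/(2(1−α)))·t^{1−α}}. -/
open RealInnerProductSpace

private lemma aux_key (μ r α s p V W U F G : ℝ) (hr : 0 < r)
    (hs0 : 0 < s) (hp0 : 0 < p) (hV : 0 ≤ V) (hU : 0 ≤ U)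
    (hsF : F - G ≤ -(μ/2)*U)
    (hPs : 0 ≤ μ*s^2 - r^2/4*(s*p)^2 + r*α/2*(s*p) + α*(α+1)) :
    r/2*p*(1/2*V + r/2*p*W + (r^2/8*p^2 + r*α/4*(p*s⁻¹))*U + F)
      + (-(r/2*p)*V - r^2/4*p^2*W - r/2*p*G
        - (r^2*α/4*p^2*s⁻¹ + r*α*(α+1)/4*p*s⁻¹^2)*U) ≤ 0 := by
  have hsne : s ≠ 0 := hs0.ne'
  have hiden : r/2*p*(1/2*V + r/2*p*W + (r^2/8*p^2 + r*α/4*(p*s⁻¹))*U + F)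
      + (-(r/2*p)*V - r^2/4*p^2*W - r/2*p*G
        - (r^2*α/4*p^2*s⁻¹ + r*α*(α+1)/4*p*s⁻¹^2)*U)
      = -(r/4)*p*V + (r/2)*p*((F - G) + μ/2*U)
        - (r/4)*p*s⁻¹^2*U*(μ*s^2 - r^2/4*(s*p)^2 + r*α/2*(s*p) + α*(α+1)) := by
    field_simp
    ring
  rw [hiden]
  have t1 : 0 ≤ r/4*p*V := by positivity
  have t2 : (r/2*p) * ((F - G) + μ/2*U) ≤ 0 := by
    have h2 : (F - G) + μ/2*U ≤ 0 := by linarith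
    exact mul_nonpos_iff.2 (Or.inl ⟨by positivity, h2⟩)
  have t3 : 0 ≤ (r/4)*p*s⁻¹^2*U*(μ*s^2 - r^2/4*(s*p)^2 + r*α/2*(s*p) + α*(α+1)) :=
    mul_nonneg (by positivity) hPs
  linarith

private lemma aux_LE (d : ℕ) (r α s : ℝ) (hr : 0 < r) (hα0 : 0 < α) (hs0 : 0 < s)
    (vv u : EuclideanSpace ℝ (Fin d)) (F Dx : ℝ) (hDx : 0 < Dx) :
    1 / 2 * ‖Real.sqrt (r / 2 * s ^ (1 - α) / (r / 2 * s ^ (1 - α) + α) * Dx) • vv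
        + Real.sqrt (r / 2 * (r / 2 * s ^ (1 - α) + α) * s ^ (-α - 1) * Dx) • u‖ ^ 2
      + 1 / 2 * ((1 - r / 2 * s ^ (1 - α) / (r / 2 * s ^ (1 - α) + α)) * Dx) * ‖vv‖ ^ 2
      + Dx * F
    = Dx * (1/2*⟪vv, vv⟫ + r/2*s^(-α)*⟪vv, u⟫
      + (r^2/8*(s^(-α))^2 + r*α/4*(s^(-α)*s⁻¹))*⟪u, u⟫ + F) := by
  have hX : 0 < s ^ (1-α) := Real.rpow_pos_of_pos hs0 _
  have hgα : 0 < r / 2 * s ^ (1 - α) + α := by positivity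
  have hm1 : s^(-α-1) = s^(-α) * s⁻¹ := by
    rw [show (-α-1:ℝ) = -α + (-1) by ring, Real.rpow_add hs0, Real.rpow_neg_one]
  have hm2 : (s^(-α))^2 = s^(1-α) * s^(-α-1) := by
    rw [← Real.rpow_natCast (s^(-α)) 2, ← Real.rpow_mul hs0.le, ← Real.rpow_add hs0]
    congr 1; push_cast; ring
  set A := Real.sqrt (r / 2 * s ^ (1 - α) / (r / 2 * s ^ (1 - α) + α) * Dx) with hA_def
  set B := Real.sqrt (r / 2 * (r / 2 * s ^ (1 - α) + α) * s ^ (-α - 1) * Dx) with hB_def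
  have hpos : 0 < s^(-α-1) := Real.rpow_pos_of_pos hs0 _
  have hA2 : A^2 = r / 2 * s ^ (1 - α) / (r / 2 * s ^ (1 - α) + α) * Dx :=
    Real.sq_sqrt (by positivity)
  have hB2 : B^2 = r / 2 * (r / 2 * s ^ (1 - α) + α) * s ^ (-α - 1) * Dx :=
    Real.sq_sqrt (by positivity)
  have hAB : A * B = r/2*s^(-α)*Dx := by
    rw [hA_def, hB_def, ← Real.sqrt_mul (by positivity)]
    rw [show r / 2 * s ^ (1 - α) / (r / 2 * s ^ (1 - α) + α) * Dx
        * (r / 2 * (r / 2 * s ^ (1 - α) + α) * s ^ (-α - 1) * Dx)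
        = (r/2*s^(-α)*Dx)^2 by
      rw [show (r/2*s^(-α)*Dx)^2 = r^2/4 * (s^(-α))^2 * Dx^2 by ring, hm2]
      field_simp
      ring]
    exact Real.sqrt_sq (by positivity)
  have hnorm : ‖A • vv + B • u‖^2
      = A^2*‖vv‖^2 + 2*(A*B)*⟪vv, u⟫ + B^2*‖u‖^2 := by
    rw [norm_add_sq_real, norm_smul, norm_smul, real_inner_smul_left, real_inner_smul_right,
      Real.norm_eq_abs, Real.norm_eq_abs, abs_of_nonneg (Real.sqrt_nonneg _),
      abs_of_nonneg (Real.sqrt_nonneg _)]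
    ring
  rw [hnorm, hA2, hB2, hAB, ← real_inner_self_eq_norm_sq vv, ← real_inner_self_eq_norm_sq u,
    hm1, hm2, hm1]
  field_simp
  ring

private lemma aux_deriv (d : ℕ) (f : EuclideanSpace ℝ (Fin d) → ℝ) (r α T : ℝ) (hT : 0 < T)
    (hf : ContDiff ℝ 2 f)
    (xstar : EuclideanSpace ℝ (Fin d))
    (x v a : ℝ → EuclideanSpace ℝ (Fin d))
    (hx : ∀ t ∈ Set.Ici T, HasDerivWithinAt x (v t) (Set.Ici T) t)
    (hv : ∀ t ∈ Set.Ici T, HasDerivWithinAt v (a t) (Set.Ici T) t)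
    (hode : ∀ t ∈ Set.Ici T, a t + (r / t ^ α) • v t + gradient f (x t) = 0)
    (s : ℝ) (hs : s ∈ Set.Ici T) :
    HasDerivWithinAt (fun s : ℝ => 1/2*⟪v s, v s⟫ + r/2*s^(-α)*⟪v s, x s - xstar⟫
      + (r^2/8*(s^(-α))^2 + r*α/4*(s^(-α)*s⁻¹))*⟪x s - xstar, x s - xstar⟫
      + (f (x s) - f xstar))
      (-(r/2*s^(-α))*⟪v s, v s⟫ - r^2/4*(s^(-α))^2*⟪v s, x s - xstar⟫
      - r/2*s^(-α)*⟪gradient f (x s), x s - xstar⟫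
      - (r^2*α/4*(s^(-α))^2*s⁻¹ + r*α*(α+1)/4*(s^(-α))*(s⁻¹)^2)*⟪x s - xstar, x s - xstar⟫)
      (Set.Ici T) s := by
  have hfd : Differentiable ℝ f := hf.differentiable (by norm_num)
  have hs0 : 0 < s := lt_of_lt_of_le hT hs
  have hp : HasDerivWithinAt (fun t : ℝ => t ^ (-α)) (-α * s^(-α) * s⁻¹) (Set.Ici T) s := by
    have := (Real.hasDerivAt_rpow_const (p := -α) (Or.inl hs0.ne')).hasDerivWithinAt
      (s := Set.Ici T)
    refine this.congr_deriv ?_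
    rw [show -α - 1 = -α + (-1) by ring, Real.rpow_add hs0, Real.rpow_neg_one]
    ring
  have hq : HasDerivWithinAt (fun t : ℝ => t⁻¹) (-((s⁻¹)^2)) (Set.Ici T) s := by
    have := (hasDerivAt_inv hs0.ne').hasDerivWithinAt (s := Set.Ici T)
    refine this.congr_deriv ?_
    rw [inv_pow]
  have hu : HasDerivWithinAt (fun t => x t - xstar) (v s) (Set.Ici T) s := (hx s hs).sub_const _
  have h1 : HasDerivWithinAt (fun t => ⟪v t, v t⟫) (⟪v s, a s⟫ + ⟪a s, v s⟫) (Set.Ici T) s :=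
    (hv s hs).inner ℝ (hv s hs)
  have h2 : HasDerivWithinAt (fun t => ⟪v t, x t - xstar⟫) (⟪v s, v s⟫ + ⟪a s, x s - xstar⟫)
      (Set.Ici T) s := (hv s hs).inner ℝ hu
  have h3 : HasDerivWithinAt (fun t => ⟪x t - xstar, x t - xstar⟫)
      (⟪x s - xstar, v s⟫ + ⟪v s, x s - xstar⟫) (Set.Ici T) s := hu.inner ℝ hu
  have h4 : HasDerivWithinAt (fun t => f (x t)) ⟪gradient f (x s), v s⟫ (Set.Ici T) s := by
    have := ((hfd (x s)).hasGradientAt.hasFDerivAt).comp_hasDerivWithinAt s (hx s hs)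
    exact this.congr_deriv (by simp only [InnerProductSpace.toDual_apply_apply])
  have hb : HasDerivWithinAt (fun t : ℝ => r/2*t^(-α)) (r/2*(-α * s^(-α) * s⁻¹))
      (Set.Ici T) s := hp.const_mul _
  have hc : HasDerivWithinAt (fun t : ℝ => r^2/8*(t^(-α))^2 + r*α/4*(t^(-α)*t⁻¹))
      (r^2/8*(2*(s^(-α))*(-α * s^(-α) * s⁻¹))
        + r*α/4*((-α * s^(-α) * s⁻¹)*s⁻¹ + s^(-α)*(-((s⁻¹)^2))))
      (Set.Ici T) s := by
    have hsq : HasDerivWithinAt (fun t : ℝ => (t^(-α))^2) (2*(s^(-α))*(-α * s^(-α) * s⁻¹))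
        (Set.Ici T) s := by
      have := hp.pow 2
      refine this.congr_deriv ?_
      ring
    exact (hsq.const_mul _).add ((hp.mul hq).const_mul _)
  have htot := ((h1.const_mul (1/2:ℝ)).add (hb.mul h2)).add (hc.mul h3) |>.add
    (h4.sub_const (f xstar))
  refine htot.congr_deriv ?_
  have ha : a s = -((r * s^(-α)) • v s) - gradient f (x s) := by
    have h := hode s hs
    have hra : r / s ^ α = r * s^(-α) := by
      rw [Real.rpow_neg hs0.le, div_eq_mul_inv]
    rw [hra] at h
    calc a s = (a s + (r * s^(-α)) • v s + gradient f (x s))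
        - ((r * s^(-α)) • v s) - gradient f (x s) := by abel
      _ = -((r * s^(-α)) • v s) - gradient f (x s) := by rw [h]; abel
  rw [ha]
  generalize x s - xstar = u
  simp only [inner_sub_left, inner_sub_right, inner_neg_left, inner_neg_right,
    real_inner_smul_left, real_inner_smul_right]
  rw [real_inner_comm u (v s), real_inner_comm (v s) (gradient f (x s))]
  ring

/-- for μ-strongly convex `f` and `0 < α < 1`, along any solution of
`ẍ + (r/t^α)ẋ + ∇f(x) = 0` on `[T, ∞)` (with `P ≥ 0` on `[T, ∞)`), one has
`f(x(t)) − f* ≤ L(T)·e^{−(r/(2(1−α)))·t^{1−α}}`, where `L` is the Lyapunov function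
with `β = 1/2`. -/
theorem stmt16 (d : ℕ) (f : EuclideanSpace ℝ (Fin d) → ℝ) (μ : ℝ) (hμ : 0 < μ)
    (hf : ContDiff ℝ 2 f)
    (hsc : ∀ z y : EuclideanSpace ℝ (Fin d),
      μ / 2 * ‖y - z‖ ^ 2 ≤ f y - f z - ⟪gradient f z, y - z⟫)
    (xstar : EuclideanSpace ℝ (Fin d)) (hmin : ∀ y, f xstar ≤ f y)
    (r α : ℝ) (hr : 0 < r) (hα0 : 0 < α) (hα1 : α < 1)
    (T : ℝ) (hT : 0 < T)
    (hP : ∀ s ≥ T, 0 ≤ μ * s ^ 2 - r ^ 2 / 4 * s ^ (2 * (1 - α))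
      + r * α / 2 * s ^ (1 - α) + α * (α + 1))
    (x v a : ℝ → EuclideanSpace ℝ (Fin d))
    (hx : ∀ t ∈ Set.Ici T, HasDerivWithinAt x (v t) (Set.Ici T) t)
    (hv : ∀ t ∈ Set.Ici T, HasDerivWithinAt v (a t) (Set.Ici T) t)
    (hode : ∀ t ∈ Set.Ici T, a t + (r / t ^ α) • v t + gradient f (x t) = 0) :
    let ξ : ℝ → ℝ := fun t => r / (1 - α) * t ^ (1 - α)
    let D : ℝ → ℝ := fun t => Real.exp (ξ t / 2)
    let B : ℝ → ℝ := fun t =>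
      Real.sqrt (r / 2 * (r / 2 * t ^ (1 - α) + α) * t ^ (-α - 1) * Real.exp (ξ t / 2))
    let A : ℝ → ℝ := fun t =>
      Real.sqrt (r / 2 * t ^ (1 - α) / (r / 2 * t ^ (1 - α) + α) * Real.exp (ξ t / 2))
    let C : ℝ → ℝ := fun t =>
      (1 - r / 2 * t ^ (1 - α) / (r / 2 * t ^ (1 - α) + α)) * Real.exp (ξ t / 2)
    let L : ℝ → ℝ := fun t => 1 / 2 * ‖A t • v t + B t • (x t - xstar)‖ ^ 2
      + 1 / 2 * C t * ‖v t‖ ^ 2 + D t * (f (x t) - f xstar)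
    ∀ t ≥ T, f (x t) - f xstar ≤
      L T * Real.exp (-(r / (2 * (1 - α))) * t ^ (1 - α)) := by
  intro ξ D B A C L
  have h1α : (0:ℝ) < 1 - α := by linarith
  have h1αne : (1 - α : ℝ) ≠ 0 := h1α.ne'
  set E : ℝ → ℝ := fun s => 1/2*⟪v s, v s⟫ + r/2*s^(-α)*⟪v s, x s - xstar⟫
      + (r^2/8*(s^(-α))^2 + r*α/4*(s^(-α)*s⁻¹))*⟪x s - xstar, x s - xstar⟫
      + (f (x s) - f xstar) with hE_def
  set E' : ℝ → ℝ := fun s => -(r/2*s^(-α))*⟪v s, v s⟫ - r^2/4*(s^(-α))^2*⟪v s, x s - xstar⟫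
      - r/2*s^(-α)*⟪gradient f (x s), x s - xstar⟫
      - (r^2*α/4*(s^(-α))^2*s⁻¹ + r*α*(α+1)/4*(s^(-α))*(s⁻¹)^2)*⟪x s - xstar, x s - xstar⟫
      with hE'_def
  have hs0 : ∀ s ∈ Set.Ici T, (0:ℝ) < s := fun s hs => lt_of_lt_of_le hT hs
  -- derivative of D
  have hD_deriv : ∀ s ∈ Set.Ici T,
      HasDerivWithinAt D (r/2 * s^(-α) * D s) (Set.Ici T) s := by
    intro s hs
    have h1 : HasDerivWithinAt (fun t : ℝ => t ^ (1-α)) ((1-α) * s ^ (-α)) (Set.Ici T) s := by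
      have := (Real.hasDerivAt_rpow_const (p := 1-α)
        (Or.inl (hs0 s hs).ne')).hasDerivWithinAt (s := Set.Ici T)
      refine this.congr_deriv ?_
      rw [show (1-α-1:ℝ) = -α by ring]
    have h2 := ((h1.const_mul (r / (1-α))).div_const 2).exp
    convert h2 using 1
    simp only [D, ξ]
    field_simp
  -- derivative of E
  have hE_deriv : ∀ s ∈ Set.Ici T, HasDerivWithinAt E (E' s) (Set.Ici T) s :=
    fun s hs => aux_deriv d f r α T hT hf xstar x v a hx hv hode s hs
  -- L = D * E
  have hL_eq : ∀ s ∈ Set.Ici T, L s = D s * E s := by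
    intro s hs
    simp only [L, A, B, C, D, E]
    exact aux_LE d r α s hr hα0 (hs0 s hs) (v s) (x s - xstar) (f (x s) - f xstar)
      (Real.exp (ξ s / 2)) (Real.exp_pos _)
  -- derivative is nonpositive
  have hkey : ∀ s ∈ Set.Ici T, r/2 * s^(-α) * D s * E s + D s * E' s ≤ 0 := by
    intro s hs
    have hs0' : 0 < s := hs0 s hs
    have hDp : 0 < D s := Real.exp_pos _
    have hmain : r/2 * s^(-α) * E s + E' s ≤ 0 := by
      have hV : (0:ℝ) ≤ ⟪v s, v s⟫ := real_inner_self_nonneg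
      have hU : (0:ℝ) ≤ ⟪x s - xstar, x s - xstar⟫ := real_inner_self_nonneg
      have hp0 : 0 < s^(-α) := Real.rpow_pos_of_pos hs0' _
      have hsF : (f (x s) - f xstar) - ⟪gradient f (x s), x s - xstar⟫
          ≤ -(μ/2)*⟪x s - xstar, x s - xstar⟫ := by
        have h := hsc (x s) xstar
        rw [norm_sub_rev] at h
        have h2 : ⟪gradient f (x s), xstar - x s⟫ = -⟪gradient f (x s), x s - xstar⟫ := by
          rw [← inner_neg_right, neg_sub]
        have h3 : ‖x s - xstar‖^2 = ⟪x s - xstar, x s - xstar⟫ :=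
          (real_inner_self_eq_norm_sq _).symm
        rw [h2, h3] at h
        linarith
      have hPs : 0 ≤ μ*s^2 - r^2/4*(s*s^(-α))^2 + r*α/2*(s*s^(-α)) + α*(α+1) := by
        have h := hP s hs
        have h2p : s^(2*(1-α)) = (s^(1-α))^2 := by
          rw [show (2*(1-α):ℝ) = (1-α)*2 by ring, Real.rpow_mul hs0'.le, Real.rpow_two]
        have hX : s^(1-α) = s * s^(-α) := by
          rw [show (1-α:ℝ) = 1 + (-α) by ring, Real.rpow_add hs0', Real.rpow_one]
        rw [h2p, hX] at h
        linarith
      simp only [E, E']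
      exact aux_key μ r α s (s^(-α)) _ _ _ _ _ hr hs0' hp0 hV hU hsF hPs
    calc r/2 * s^(-α) * D s * E s + D s * E' s
        = D s * (r/2 * s^(-α) * E s + E' s) := by ring
      _ ≤ 0 := mul_nonpos_iff.2 (Or.inl ⟨hDp.le, hmain⟩)
  -- antitone
  have hanti : AntitoneOn (fun s => D s * E s) (Set.Ici T) := by
    apply antitoneOn_of_hasDerivWithinAt_nonpos (convex_Ici T)
      (f' := fun s => r/2 * s^(-α) * D s * E s + D s * E' s)
    · intro s hs
      exact ((hD_deriv s hs).mul (hE_deriv s hs)).continuousWithinAt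
    · intro s hs
      rw [interior_Ici] at hs ⊢
      exact (((hD_deriv s (Set.Ioi_subset_Ici_self hs)).mul (hE_deriv s (Set.Ioi_subset_Ici_self hs))).mono Set.Ioi_subset_Ici_self)
    · intro s hs
      rw [interior_Ici] at hs
      exact hkey s (Set.Ioi_subset_Ici_self hs)
  -- conclusion
  intro t ht
  have htI : t ∈ Set.Ici T := ht
  have ht0 : 0 < t := hs0 t htI
  have hDpos : 0 < D t := Real.exp_pos _
  have hmono := hanti Set.self_mem_Ici htI ht
  have hlow : D t * (f (x t) - f xstar) ≤ L t := by
    have hX : 0 < t ^ (1-α) := Real.rpow_pos_of_pos ht0 _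
    have hgα : 0 < r/2*t^(1-α)+α := by positivity
    have hCt : 0 ≤ (1 - r/2*t^(1-α)/(r/2*t^(1-α)+α)) := by
      have : r/2*t^(1-α)/(r/2*t^(1-α)+α) ≤ 1 :=
        (div_le_one hgα).2 (by linarith)
      linarith
    simp only [L, C]
    have hn1 : 0 ≤ 1/2 * ‖A t • v t + B t • (x t - xstar)‖^2 := by positivity
    have hn2 : 0 ≤ 1/2 * ((1 - r/2*t^(1-α)/(r/2*t^(1-α)+α)) * Real.exp (ξ t / 2))
        * ‖v t‖^2 :=
      mul_nonneg (mul_nonneg (by norm_num)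
        (mul_nonneg hCt (Real.exp_pos _).le)) (sq_nonneg _)
    linarith
  have hchain : D t * (f (x t) - f xstar) ≤ L T := by
    rw [hL_eq T Set.self_mem_Ici]
    exact le_trans (hlow.trans_eq (hL_eq t htI)) hmono
  have hexp : Real.exp (-(r / (2 * (1 - α))) * t ^ (1 - α)) = (D t)⁻¹ := by
    have harg : -(r / (2 * (1 - α))) * t ^ (1 - α) = -(ξ t / 2) := by
      simp only [ξ]
      field_simp
    rw [harg, Real.exp_neg]
  rw [hexp, show L T * (D t)⁻¹ = L T / D t from (div_eq_mul_inv _ _).symm,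
    le_div_iff₀ hDpos]
  calc (f (x t) - f xstar) * D t = D t * (f (x t) - f xstar) := by ring
    _ ≤ L T := hchain
end

section
/- Let f : ℝ^d → ℝ be twice continuously differentiable and μ-strongly convex (μ > 0) with minimizer x* and f* = f(x*). Let r > 3, set β = (1+r)/(2r) and T = √((r−3)(r+1)/(4μ)), and define for t > 0: D(t) = t^{(1+r)/2}, B(t) = √(βr·[(1−β)r + 1]·t^{βr−2}), A(t) = √((βr/((1−β)r + 1))·t^{βr}), C(t) = [1 − βr/((1−β)r + 1)]·t^{βr}, and L(t) = (1/2)‖A(t)ẋ(t) + B(t)(x(t) − x*)‖² + (1/2)C(t)‖ẋ(t)‖² + D(t)(f(x(t)) − f*). Then for every twice differentiable solution x of ẍ(t) + (r/t)·ẋ(t) + ∇f(x(t)) = 0 on [T, ∞) and all t ≥ T: f(x(t)) − f* ≤ L(T)·t^{−(1+r)/2}. -/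
open RealInnerProductSpace

set_option maxHeartbeats 1000000

/-- for μ-strongly convex `f`, `α = 1` and `r > 3`, with
`β = (1+r)/(2r)` and `T = √((r−3)(r+1)/(4μ))`, along any solution of
`ẍ + (r/t)ẋ + ∇f(x) = 0` on `[T, ∞)` one has
`f(x(t)) − f* ≤ L(T)·t^{−(1+r)/2}`. -/
theorem stmt17 (d : ℕ) (f : EuclideanSpace ℝ (Fin d) → ℝ) (μ : ℝ) (hμ : 0 < μ)
    (hf : ContDiff ℝ 2 f)
    (hsc : ∀ z y : EuclideanSpace ℝ (Fin d),
      μ / 2 * ‖y - z‖ ^ 2 ≤ f y - f z - ⟪gradient f z, y - z⟫)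
    (xstar : EuclideanSpace ℝ (Fin d)) (hmin : ∀ y, f xstar ≤ f y)
    (r : ℝ) (hr : 3 < r)
    (x v a : ℝ → EuclideanSpace ℝ (Fin d)) :
    let β : ℝ := (1 + r) / (2 * r)
    let T : ℝ := Real.sqrt ((r - 3) * (r + 1) / (4 * μ))
    let D : ℝ → ℝ := fun t => t ^ ((1 + r) / 2)
    let B : ℝ → ℝ := fun t => Real.sqrt (β * r * ((1 - β) * r + 1) * t ^ (β * r - 2))
    let A : ℝ → ℝ := fun t => Real.sqrt (β * r / ((1 - β) * r + 1) * t ^ (β * r))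
    let C : ℝ → ℝ := fun t => (1 - β * r / ((1 - β) * r + 1)) * t ^ (β * r)
    let L : ℝ → ℝ := fun t => 1 / 2 * ‖A t • v t + B t • (x t - xstar)‖ ^ 2
      + 1 / 2 * C t * ‖v t‖ ^ 2 + D t * (f (x t) - f xstar)
    (∀ t ∈ Set.Ici T, HasDerivWithinAt x (v t) (Set.Ici T) t) →
    (∀ t ∈ Set.Ici T, HasDerivWithinAt v (a t) (Set.Ici T) t) →
    (∀ t ∈ Set.Ici T, a t + (r / t) • v t + gradient f (x t) = 0) →
    ∀ t ≥ T, f (x t) - f xstar ≤ L T * t ^ (-(1 + r) / 2) := by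
  intro β T D B A C L hx hv hode
  have hr0 : (0:ℝ) < r := by linarith
  set p : ℝ := (1 + r) / 2 with hpdef
  have hp2 : 2 < p := by rw [hpdef]; linarith
  have hβr : β * r = p := by
    show (1 + r) / (2 * r) * r = p
    rw [hpdef]; field_simp
  have hβr' : (1 - β) * r + 1 = p := by
    show (1 - (1 + r) / (2 * r)) * r + 1 = p
    rw [hpdef]; field_simp; ring
  have hTpos : 0 < T := by
    have : (0:ℝ) < (r - 3) * (r + 1) / (4 * μ) :=
      div_pos (mul_pos (by linarith) (by linarith)) (by linarith)
    exact Real.sqrt_pos.mpr this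
  have hT2 : T * T = (r - 3) * (r + 1) / (4 * μ) :=
    Real.mul_self_sqrt (le_of_lt (div_pos (mul_pos (by linarith) (by linarith)) (by linarith)))
  -- the Lyapunov function
  set u : ℝ → EuclideanSpace ℝ (Fin d) := fun s =>
    s ^ (p/2) • v s + (p * s ^ (p/2 - 1)) • (x s - xstar) with hudef
  set G : ℝ → ℝ := fun s => 1/2 * ⟪u s, u s⟫ + s ^ p * (f (x s) - f xstar) with hGdef
  set Φ : ℝ → ℝ := fun s => (3 - r)/4 * s ^ (p-1) * ‖v s‖^2
    + p^2 * (p/2 - 1) * s ^ (p-3) * ‖x s - xstar‖^2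
    + p * s^(p-1) * (f (x s) - f xstar - ⟪gradient f (x s), x s - xstar⟫) with hΦdef
  have hfd : Differentiable ℝ f := hf.differentiable (by norm_num)
  -- derivative of G
  have hG : ∀ s ∈ Set.Ici T, HasDerivWithinAt G (Φ s) (Set.Ici T) s := by
    intro s hs
    have hs0 : 0 < s := lt_of_lt_of_le hTpos hs
    have ha : a s = -((r / s) • v s + gradient f (x s)) := by
      have h := hode s hs
      rw [add_assoc] at h
      exact eq_neg_of_add_eq_zero_left h
    have hA1 : HasDerivWithinAt (fun y : ℝ => y ^ (p/2)) (p/2 * s ^ (p/2 - 1)) (Set.Ici T) s :=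
      (Real.hasDerivAt_rpow_const (Or.inl hs0.ne')).hasDerivWithinAt
    have hB1 : HasDerivWithinAt (fun y : ℝ => p * y ^ (p/2 - 1))
        (p * ((p/2 - 1) * s ^ (p/2 - 1 - 1))) (Set.Ici T) s :=
      ((Real.hasDerivAt_rpow_const (Or.inl hs0.ne')).hasDerivWithinAt).const_mul p
    have hw : HasDerivWithinAt (fun y => x y - xstar) (v s) (Set.Ici T) s :=
      (hx s hs).sub_const xstar
    have hu1 : HasDerivWithinAt u
        ((s ^ (p/2) • a s + (p/2 * s ^ (p/2 - 1)) • v s)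
         + ((p * s ^ (p/2 - 1)) • v s + (p * ((p/2 - 1) * s ^ (p/2 - 1 - 1))) • (x s - xstar)))
        (Set.Ici T) s :=
      (hA1.smul (hv s hs)).add (hB1.smul hw)
    have hfc : HasDerivWithinAt (fun y => f (x y)) ⟪gradient f (x s), v s⟫ (Set.Ici T) s := by
      have hg : HasGradientAt f (gradient f (x s)) (x s) := (hfd (x s)).hasGradientAt
      have h2 := hg.hasFDerivAt.comp_hasDerivWithinAt s (hx s hs)
      rw [InnerProductSpace.toDual_apply_apply] at h2
      exact h2
    have hD1 : HasDerivWithinAt (fun y : ℝ => y ^ p) (p * s ^ (p - 1)) (Set.Ici T) s :=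
      (Real.hasDerivAt_rpow_const (Or.inl hs0.ne')).hasDerivWithinAt
    set U' : EuclideanSpace ℝ (Fin d) :=
      ((s ^ (p/2) • a s + (p/2 * s ^ (p/2 - 1)) • v s)
       + ((p * s ^ (p/2 - 1)) • v s + (p * ((p/2 - 1) * s ^ (p/2 - 1 - 1))) • (x s - xstar)))
      with hU'def
    have hGraw : HasDerivWithinAt G
        (1/2 * (⟪u s, U'⟫ + ⟪U', u s⟫)
          + (p * s ^ (p - 1) * (f (x s) - f xstar) + s ^ p * ⟪gradient f (x s), v s⟫))
        (Set.Ici T) s :=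
      ((hu1.inner ℝ hu1).const_mul (1/2)).add (hD1.mul ((hfc).sub_const (f xstar)))
    convert hGraw using 1
    -- scalar identity
    rw [hΦdef, hU'def, hudef, ha]
    have hVn : ⟪v s, v s⟫ = ‖v s‖^2 := real_inner_self_eq_norm_sq _
    have hXn : ⟪x s - xstar, x s - xstar⟫ = ‖x s - xstar‖^2 := real_inner_self_eq_norm_sq _
    simp only [inner_add_left, inner_add_right, real_inner_smul_left, real_inner_smul_right,
      inner_neg_left, inner_neg_right, real_inner_comm (x s - xstar) (v s),
      real_inner_comm (gradient f (x s)) (v s), real_inner_comm (gradient f (x s)) (x s - xstar)]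
    rw [hVn, hXn]
    have hsne : s ≠ 0 := hs0.ne'
    have hq1 : s ^ (p/2) = s * s ^ (p/2-1) := by
      conv_lhs => rw [show p/2 = 1 + (p/2-1) by ring, Real.rpow_add hs0, Real.rpow_one]
    have hq3 : s ^ (p/2 - 1 - 1) = s ^ (p/2-1) / s := by
      conv_lhs => rw [show p/2-1-1 = (p/2-1) + (-1) by ring, Real.rpow_add hs0,
        Real.rpow_neg_one]
      ring
    have hP1 : s ^ (p-1) = s * (s ^ (p/2-1) * s ^ (p/2-1)) := by
      conv_lhs => rw [show p-1 = 1 + ((p/2-1)+(p/2-1)) by ring, Real.rpow_add hs0,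
        Real.rpow_one, Real.rpow_add hs0]
    have hPp : s ^ p = s * s * (s ^ (p/2-1) * s ^ (p/2-1)) := by
      conv_lhs => rw [show p = 1 + (1 + ((p/2-1)+(p/2-1))) by ring, Real.rpow_add hs0,
        Real.rpow_one, Real.rpow_add hs0, Real.rpow_one, Real.rpow_add hs0]
      ring
    have hP3 : s ^ (p-3) = s ^ (p/2-1) * s ^ (p/2-1) / s := by
      conv_lhs => rw [show p-3 = (-1) + ((p/2-1)+(p/2-1)) by ring, Real.rpow_add hs0,
        Real.rpow_neg_one, Real.rpow_add hs0]
      ring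
    simp only [hq1, hq3, hP1, hPp, hP3]
    set q := s ^ (p/2-1) with hqdef
    field_simp
    ring
  have hp0 : (0:ℝ) < p := by linarith
  have hPhile : ∀ s ∈ Set.Ici T, Φ s ≤ 0 := by
    intro s hs
    have hs0 : 0 < s := lt_of_lt_of_le hTpos hs
    have hsc' : f (x s) - f xstar - ⟪ gradient f (x s), x s - xstar⟫
        ≤ -(μ/2) * ‖x s - xstar‖^2 := by
      have h := hsc (x s) xstar
      have h1 : ‖xstar - x s‖ = ‖x s - xstar‖ := norm_sub_rev _ _
      have h2 : ⟪ gradient f (x s), xstar - x s⟫ = -⟪ gradient f (x s), x s - xstar⟫ := by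
        rw [show xstar - x s = -(x s - xstar) by abel, inner_neg_right]
      rw [h1, h2] at h
      linarith
    have hP1 : s ^ (p-1) = s ^ (p-3) * (s * s) := by
      conv_lhs => rw [show p-1 = (p-3) + (1+1) by ring, Real.rpow_add hs0,
        Real.rpow_add hs0, Real.rpow_one]
    have hP3nn : (0:ℝ) ≤ s ^ (p-3) := Real.rpow_nonneg hs0.le _
    have hP1nn : (0:ℝ) ≤ s ^ (p-1) := Real.rpow_nonneg hs0.le _
    have hss : T * T ≤ s * s := mul_le_mul hs hs hTpos.le hs0.le
    have hkey : p * (p/2 - 1) ≤ μ/2 * (s*s) := by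
      have h1 : μ/2 * (T*T) ≤ μ/2 * (s*s) :=
        mul_le_mul_of_nonneg_left hss (by linarith)
      have h2 : μ/2 * (T*T) = (r-3)*(r+1)/8 := by
        rw [hT2]; field_simp; ring
      have h3 : p * (p/2 - 1) = (r-3)*(r+1)/8 := by rw [hpdef]; ring
      linarith
    have t1 : (3 - r)/4 * s ^ (p-1) * ‖v s‖^2 ≤ 0 := by
      have := mul_nonneg hP1nn (sq_nonneg ‖v s‖)
      nlinarith
    have t3 : p * s^(p-1) * (f (x s) - f xstar - ⟪ gradient f (x s), x s - xstar⟫)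
        ≤ p * s^(p-1) * (-(μ/2) * ‖x s - xstar‖^2) :=
      mul_le_mul_of_nonneg_left hsc' (mul_nonneg hp0.le hP1nn)
    have t2 : p^2 * (p/2 - 1) * s ^ (p-3) * ‖x s - xstar‖^2
        + p * s^(p-1) * (-(μ/2) * ‖x s - xstar‖^2) ≤ 0 := by
      rw [hP1]
      have hnn : (0:ℝ) ≤ p * s ^ (p-3) * ‖x s - xstar‖^2 :=
        mul_nonneg (mul_nonneg hp0.le hP3nn) (sq_nonneg _)
      nlinarith [mul_nonneg hnn (sub_nonneg.mpr hkey)]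
    show (3 - r)/4 * s ^ (p-1) * ‖v s‖^2
      + p^2 * (p/2 - 1) * s ^ (p-3) * ‖x s - xstar‖^2
      + p * s^(p-1) * (f (x s) - f xstar - ⟪ gradient f (x s), x s - xstar⟫) ≤ 0
    linarith
  have hanti : AntitoneOn G (Set.Ici T) := by
    exact antitoneOn_of_hasDerivWithinAt_nonpos (convex_Ici T)
      (fun s hs => (hG s hs).continuousWithinAt)
      (f' := Φ)
      (fun s hs => (hG s (interior_subset hs)).mono interior_subset)
      (fun s hs => hPhile s (interior_subset hs))
  have hAT : T ^ (p/2) * T ^ (p/2) = T ^ p := by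
    rw [← Real.rpow_add hTpos]; ring_nf
  have hLTval : L T = 1/2 * ‖T^(p/2) • v T + (p*T^(p/2-1)) • (x T - xstar)‖^2
      + T^p * (f (x T) - f xstar) := by
    have hCT : C T = 0 := by
      show (1 - β*r/((1-β)*r+1)) * T ^ (β*r) = 0
      rw [hβr, hβr', div_self hp0.ne']
      simp
    have hAT' : A T = T ^ (p/2) := by
      show Real.sqrt (β*r/((1-β)*r+1) * T ^ (β*r)) = T ^ (p/2)
      rw [hβr, hβr', div_self hp0.ne', one_mul, ← hAT, Real.sqrt_mul_self
        (Real.rpow_nonneg hTpos.le _)]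
    have hBT' : B T = p * T ^ (p/2 - 1) := by
      show Real.sqrt (β*r*((1-β)*r+1) * T ^ (β*r-2)) = p * T ^ (p/2 - 1)
      rw [hβr, hβr']
      have hh : p * p * T ^ (p - 2) = (p * T ^ (p/2-1)) * (p * T ^ (p/2-1)) := by
        rw [show p-2 = (p/2-1) + (p/2-1) by ring, Real.rpow_add hTpos]
        ring
      rw [hh, Real.sqrt_mul_self (mul_nonneg hp0.le (Real.rpow_nonneg hTpos.le _))]
    have hDT : D T = T ^ p := by
      show T ^ ((1+r)/2) = T ^ p
      rw [hpdef]
    show 1/2 * ‖A T • v T + B T • (x T - xstar)‖^2 + 1/2 * C T * ‖v T‖^2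
      + D T * (f (x T) - f xstar) = _
    rw [hAT', hBT', hCT, hDT]
    ring
  have hGT : G T = L T := by
    rw [hLTval, hGdef, hudef]
    simp only []
    rw [real_inner_self_eq_norm_sq]
  intro t ht
  have ht0 : 0 < t := lt_of_lt_of_le hTpos ht
  have htp : 0 < t ^ p := Real.rpow_pos_of_pos ht0 p
  have hGle : G t ≤ G T := hanti Set.self_mem_Ici ht ht
  have h1 : t ^ p * (f (x t) - f xstar) ≤ G t := by
    rw [hGdef]
    simp only []
    have := real_inner_self_nonneg (x := u t)
    linarith
  have hexp : t ^ (-(1 + r) / 2) = (t ^ p)⁻¹ := by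
    rw [show -(1+r)/2 = -p by rw [hpdef]; ring, Real.rpow_neg ht0.le]
  rw [hexp, ← div_eq_mul_inv, le_div_iff₀ htp]
  have hcomm : (f (x t) - f xstar) * t ^ p = t ^ p * (f (x t) - f xstar) := mul_comm _ _
  linarith
end

section
/- Let f : ℝ^d → ℝ be twice continuously differentiable and μ-strongly convex (μ > 0) with minimizer x* and f* = f(x*). Let 0 < r ≤ 3 and t₀ > 0, and let x : [t₀, ∞) → ℝ^d be a twice differentiable solution of ẍ(t) + (r/t)·ẋ(t) + ∇f(x(t)) = 0 with x(t₀) = x₀ and ẋ(t₀) = 0. Then for all t ≥ t₀: f(x(t)) − f* ≤ [(r/3)·((r/3) + 1)·t₀^{(2r/3)−2}·‖x₀ − x*‖² + t₀^{2r/3}·(f(x₀) − f*)]·t^{−2r/3}. -/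
open RealInnerProductSpace

set_option maxHeartbeats 1000000

/-- for μ-strongly convex `f`, `α = 1` and `0 < r ≤ 3`, along the
solution of `ẍ + (r/t)ẋ + ∇f(x) = 0` on `[t₀, ∞)` with `x(t₀) = x₀`, `ẋ(t₀) = 0`,
one has `f(x(t)) − f* ≤ [(r/3)((r/3)+1)t₀^{(2r/3)−2}‖x₀ − x*‖²
+ t₀^{2r/3}(f(x₀) − f*)]·t^{−2r/3}`. -/
theorem stmt18 (d : ℕ) (f : EuclideanSpace ℝ (Fin d) → ℝ) (μ : ℝ) (hμ : 0 < μ)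
    (hf : ContDiff ℝ 2 f)
    (hsc : ∀ z y : EuclideanSpace ℝ (Fin d),
      μ / 2 * ‖y - z‖ ^ 2 ≤ f y - f z - ⟪gradient f z, y - z⟫)
    (xstar : EuclideanSpace ℝ (Fin d)) (hmin : ∀ y, f xstar ≤ f y)
    (r t₀ : ℝ) (hr0 : 0 < r) (hr3 : r ≤ 3) (ht₀ : 0 < t₀)
    (x₀ : EuclideanSpace ℝ (Fin d))
    (x v a : ℝ → EuclideanSpace ℝ (Fin d))
    (hx : ∀ t ∈ Set.Ici t₀, HasDerivWithinAt x (v t) (Set.Ici t₀) t)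
    (hv : ∀ t ∈ Set.Ici t₀, HasDerivWithinAt v (a t) (Set.Ici t₀) t)
    (hode : ∀ t ∈ Set.Ici t₀, a t + (r / t) • v t + gradient f (x t) = 0)
    (hx0 : x t₀ = x₀) (hv0 : v t₀ = 0) :
    ∀ t ≥ t₀, f (x t) - f xstar ≤
      (r / 3 * (r / 3 + 1) * t₀ ^ (2 * r / 3 - 2) * ‖x₀ - xstar‖ ^ 2
        + t₀ ^ (2 * r / 3) * (f x₀ - f xstar)) * t ^ (-(2 * r / 3)) := by
  have hfd : Differentiable ℝ f := hf.differentiable two_ne_zero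
  have hgradeq : ∀ z (y : EuclideanSpace ℝ (Fin d)), ⟪gradient f z, y⟫ = fderiv ℝ f z y :=
    fun z y => InnerProductSpace.toDual_symm_apply
  set X : ℝ → EuclideanSpace ℝ (Fin d) := fun s => x s - xstar with hXdef
  set g : ℝ → EuclideanSpace ℝ (Fin d) :=
    fun s => (2 * (r / 3) * s ^ (r / 3 - 1)) • X s + s ^ (r / 3) • v s with hgdef
  set E : ℝ → ℝ := fun s =>
    (s ^ (2 * r / 3) * (f (x s) - f xstar) + 1 / 2 * ⟪g s, g s⟫)
      + r / 3 * (1 - r / 3) * (s ^ (2 * r / 3 - 2) * ⟪X s, X s⟫) with hEdef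
  set Gd : ℝ → EuclideanSpace ℝ (Fin d) := fun s =>
    ((2 * (r / 3) * s ^ (r / 3 - 1)) • v s
        + (2 * (r / 3) * ((r / 3 - 1) * s ^ (r / 3 - 1 - 1))) • X s)
      + (s ^ (r / 3) • a s + (r / 3 * s ^ (r / 3 - 1)) • v s) with hGddef
  set D : ℝ → ℝ := fun s =>
    ((2 * r / 3 * s ^ (2 * r / 3 - 1)) * (f (x s) - f xstar)
        + s ^ (2 * r / 3) * ⟪gradient f (x s), v s⟫
      + 1 / 2 * (⟪g s, Gd s⟫ + ⟪Gd s, g s⟫))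
      + r / 3 * (1 - r / 3) * ((2 * r / 3 - 2) * s ^ (2 * r / 3 - 2 - 1) * ⟪X s, X s⟫
        + s ^ (2 * r / 3 - 2) * (⟪X s, v s⟫ + ⟪v s, X s⟫)) with hDdef
  have hspos : ∀ s ∈ Set.Ici t₀, (0 : ℝ) < s := fun s hs => lt_of_lt_of_le ht₀ hs
  have hpow : ∀ (p : ℝ), ∀ s ∈ Set.Ici t₀,
      HasDerivWithinAt (fun u : ℝ => u ^ p) (p * s ^ (p - 1)) (Set.Ici t₀) s :=
    fun p s hs => (Real.hasDerivAt_rpow_const (Or.inl (hspos s hs).ne')).hasDerivWithinAt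
  have hXd : ∀ s ∈ Set.Ici t₀, HasDerivWithinAt X (v s) (Set.Ici t₀) s :=
    fun s hs => (hx s hs).sub_const xstar
  have hfx : ∀ s ∈ Set.Ici t₀, HasDerivWithinAt (fun u => f (x u) - f xstar)
      ⟪gradient f (x s), v s⟫ (Set.Ici t₀) s := by
    intro s hs
    have h1 : HasDerivWithinAt (fun u => f (x u)) (fderiv ℝ f (x s) (v s)) (Set.Ici t₀) s :=
      (hfd (x s)).hasFDerivAt.comp_hasDerivWithinAt s (hx s hs)
    rw [hgradeq]
    exact h1.sub_const _
  have hgd : ∀ s ∈ Set.Ici t₀, HasDerivWithinAt g (Gd s) (Set.Ici t₀) s := by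
    intro s hs
    exact (((hpow (r / 3 - 1) s hs).const_mul (2 * (r / 3))).smul (hXd s hs)).add
      ((hpow (r / 3) s hs).smul (hv s hs))
  have hEd : ∀ s ∈ Set.Ici t₀, HasDerivWithinAt E (D s) (Set.Ici t₀) s := by
    intro s hs
    have h1 : HasDerivWithinAt (fun u : ℝ => u ^ (2 * r / 3) * (f (x u) - f xstar))
        ((2 * r / 3 * s ^ (2 * r / 3 - 1)) * (f (x s) - f xstar)
          + s ^ (2 * r / 3) * ⟪gradient f (x s), v s⟫) (Set.Ici t₀) s :=
      (hpow (2 * r / 3) s hs).mul (hfx s hs)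
    have h2 : HasDerivWithinAt (fun u => 1 / 2 * ⟪g u, g u⟫)
        (1 / 2 * (⟪g s, Gd s⟫ + ⟪Gd s, g s⟫)) (Set.Ici t₀) s :=
      ((hgd s hs).inner ℝ (hgd s hs)).const_mul (1 / 2)
    have h3 : HasDerivWithinAt
        (fun u : ℝ => r / 3 * (1 - r / 3) * (u ^ (2 * r / 3 - 2) * ⟪X u, X u⟫))
        (r / 3 * (1 - r / 3) * ((2 * r / 3 - 2) * s ^ (2 * r / 3 - 2 - 1) * ⟪X s, X s⟫
          + s ^ (2 * r / 3 - 2) * (⟪X s, v s⟫ + ⟪v s, X s⟫))) (Set.Ici t₀) s :=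
      (((hpow (2 * r / 3 - 2) s hs).mul ((hXd s hs).inner ℝ (hXd s hs))).const_mul
        (r / 3 * (1 - r / 3)))
    exact (h1.add h2).add h3
  have hDle : ∀ s ∈ Set.Ici t₀, D s ≤ 0 := by
    intro s hs
    have hs0 : (0 : ℝ) < s := hspos s hs
    have ha' : a s = -((r / s) • v s) - gradient f (x s) := by
      rw [sub_eq_add_neg, ← neg_add, eq_neg_iff_add_eq_zero, ← add_assoc]
      exact hode s hs
    have e1 : s ^ (r / 3 - 1) = s ^ (r / 3) / s := by
      rw [Real.rpow_sub hs0, Real.rpow_one]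
    have e2 : s ^ (r / 3 - 1 - 1) = s ^ (r / 3) / s / s := by
      rw [Real.rpow_sub hs0, Real.rpow_sub hs0, Real.rpow_one]
    have e3 : s ^ (2 * r / 3) = s ^ (r / 3) * s ^ (r / 3) := by
      rw [show (2 * r / 3 : ℝ) = r / 3 + r / 3 by ring, Real.rpow_add hs0]
    have e4 : s ^ (2 * r / 3 - 1) = s ^ (r / 3) * s ^ (r / 3) / s := by
      rw [Real.rpow_sub hs0, Real.rpow_one, e3]
    have e5 : s ^ (2 * r / 3 - 2) = s ^ (r / 3) * s ^ (r / 3) / s / s := by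
      rw [show (2 * r / 3 - 2 : ℝ) = 2 * r / 3 - 1 - 1 by ring,
        Real.rpow_sub hs0, Real.rpow_one, e4]
    have e6 : s ^ (2 * r / 3 - 2 - 1) = s ^ (r / 3) * s ^ (r / 3) / s / s / s := by
      rw [Real.rpow_sub hs0, Real.rpow_one, e5]
    have hDeq : D s = 2 * (r / 3) * (s ^ (r / 3) * s ^ (r / 3) / s)
          * ((f (x s) - f xstar) - ⟪gradient f (x s), x s - xstar⟫)
        + 2 * (r / 3) * ((r / 3 - 1) * (r / 3 + 1))
          * (s ^ (r / 3) * s ^ (r / 3) / (s * s * s)) * ⟪x s - xstar, x s - xstar⟫ := by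
      simp only [hDdef, hGddef, hgdef, hXdef, ha']
      simp only [inner_add_left, inner_add_right, inner_smul_left, inner_smul_right,
        inner_neg_left, inner_neg_right, inner_sub_left, inner_sub_right,
        RCLike.inner_apply, starRingEnd_apply, star_trivial, smul_neg, smul_smul]
      simp only [real_inner_comm (v s) (x s), real_inner_comm (v s) xstar,
        real_inner_comm (x s) (gradient f (x s)), real_inner_comm xstar (gradient f (x s)),
        real_inner_comm (v s) (gradient f (x s)), real_inner_comm xstar (x s)]
      simp only [e1, e2, e3, e4, e5, e6]
      ring
    rw [hDeq]
    have hA : (0 : ℝ) ≤ ⟪x s - xstar, x s - xstar⟫ := real_inner_self_nonneg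
    have hGlb : f (x s) - f xstar + μ / 2 * ⟪x s - xstar, x s - xstar⟫
        ≤ ⟪gradient f (x s), x s - xstar⟫ := by
      have h := hsc (x s) xstar
      have hn : ‖xstar - x s‖ ^ 2 = ⟪x s - xstar, x s - xstar⟫ := by
        rw [norm_sub_rev, ← real_inner_self_eq_norm_sq]
      have hneg : (⟪gradient f (x s), xstar - x s⟫ : ℝ)
          = -⟪gradient f (x s), x s - xstar⟫ := by
        rw [show xstar - x s = -(x s - xstar) by abel, inner_neg_right]
      rw [hn, hneg] at h
      linarith
    have hFG : (f (x s) - f xstar) - ⟪gradient f (x s), x s - xstar⟫ ≤ 0 := by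
      have h9 := mul_nonneg (half_pos hμ).le hA
      linarith
    have hc1 : (0 : ℝ) ≤ 2 * (r / 3) * (s ^ (r / 3) * s ^ (r / 3) / s) := by positivity
    have hc2 : 2 * (r / 3) * ((r / 3 - 1) * (r / 3 + 1)) ≤ 0 := by
      exact mul_nonpos_of_nonneg_of_nonpos (by linarith)
        (mul_nonpos_of_nonpos_of_nonneg (by linarith) (by linarith))
    have hd2 : (0 : ℝ) ≤ s ^ (r / 3) * s ^ (r / 3) / (s * s * s)
        * ⟪x s - xstar, x s - xstar⟫ := mul_nonneg (by positivity) hA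
    linarith only [mul_nonpos_of_nonneg_of_nonpos hc1 hFG,
      mul_nonpos_of_nonpos_of_nonneg hc2 hd2]
  have hEanti : AntitoneOn E (Set.Ici t₀) := by
    apply antitoneOn_of_deriv_nonpos (convex_Ici t₀)
      (fun s hs => (hEd s hs).continuousWithinAt)
    · intro s hs
      rw [interior_Ici] at hs
      exact (((hEd s (Set.mem_Ioi.mp hs).le).hasDerivAt (Ici_mem_nhds hs)).differentiableAt).differentiableWithinAt
    · intro s hs
      rw [interior_Ici] at hs
      rw [((hEd s (Set.mem_Ioi.mp hs).le).hasDerivAt (Ici_mem_nhds hs)).deriv]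
      exact hDle s (Set.mem_Ioi.mp hs).le
  intro t ht
  have ht0 : (0 : ℝ) < t := lt_of_lt_of_le ht₀ ht
  have hE0 : E t ≤ E t₀ := hEanti Set.self_mem_Ici ht ht
  have hg0 : (0 : ℝ) ≤ ⟪g t, g t⟫ := real_inner_self_nonneg
  have hX0 : (0 : ℝ) ≤ ⟪X t, X t⟫ := real_inner_self_nonneg
  have hw0 : (0 : ℝ) ≤ r / 3 * (1 - r / 3) * (t ^ (2 * r / 3 - 2) * ⟪X t, X t⟫) := by
    have : (0 : ℝ) ≤ t ^ (2 * r / 3 - 2) := (Real.rpow_pos_of_pos ht0 _).le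
    have h1 : (0 : ℝ) ≤ r / 3 * (1 - r / 3) := mul_nonneg (by linarith) (by linarith)
    exact mul_nonneg h1 (mul_nonneg this hX0)
  have hlow : t ^ (2 * r / 3) * (f (x t) - f xstar) ≤ E t := by
    simp only [hEdef]
    linarith
  have hEt0 : E t₀ = r / 3 * (r / 3 + 1) * t₀ ^ (2 * r / 3 - 2) * ‖x₀ - xstar‖ ^ 2
      + t₀ ^ (2 * r / 3) * (f x₀ - f xstar) := by
    simp only [hEdef, hgdef, hXdef, hx0, hv0, smul_zero, add_zero]
    rw [real_inner_smul_left, real_inner_smul_right, real_inner_self_eq_norm_sq]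
    have e1 : t₀ ^ (r / 3 - 1) = t₀ ^ (r / 3) / t₀ := by
      rw [Real.rpow_sub ht₀, Real.rpow_one]
    have e5 : t₀ ^ (2 * r / 3 - 2) = t₀ ^ (r / 3) * t₀ ^ (r / 3) / t₀ / t₀ := by
      rw [show (2 * r / 3 - 2 : ℝ) = (r / 3 - 1) + (r / 3 - 1) by ring,
        Real.rpow_add ht₀, e1]
      ring
    simp only [e1, e5]
    field_simp
    ring
  have hfin : t ^ (2 * r / 3) * (f (x t) - f xstar)
      ≤ r / 3 * (r / 3 + 1) * t₀ ^ (2 * r / 3 - 2) * ‖x₀ - xstar‖ ^ 2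
        + t₀ ^ (2 * r / 3) * (f x₀ - f xstar) := by
    rw [← hEt0]
    exact le_trans hlow hE0
  rw [Real.rpow_neg ht0.le, ← div_eq_mul_inv, le_div_iff₀ (Real.rpow_pos_of_pos ht0 _)]
  linarith [hfin]
end
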